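/- arXiv:2404.03848 — 13 statements merged into one kernel-verified Lean document; each statement's English description precedes it below -/
import Mathlib

section
/- Let T be a Hausdorff topological group acting continuously on a compact Hausdorff space X, and let H be a subnormal co-compact closed subgroup of T. If a point x ∈ X is almost periodic for the action of T, then x is almost periodic for the restricted action of H. -/
open MulAction Pointwise

/-- A subset `A` of a topological group `G` is *syndetic* if `K⁻¹ * A = G`
for some compact set `K ⊆ G`. -/
def Syndetic {G : Type*} [Group G] [TopologicalSpace G] (A : Set G) : Prop :=
  ∃ K : Set G, IsCompact K ∧ K⁻¹ * A = Set.univ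

/-- A point `x` is *almost periodic* for the action of `G` if for every neighborhood `U`
of `x` the return-time set `{g | g • x ∈ U}` is syndetic in `G`. -/
def IsAlmostPeriodicPt (G : Type*) {X : Type*} [Group G] [TopologicalSpace G]
    [TopologicalSpace X] [MulAction G X] (x : X) : Prop :=
  ∀ U ∈ nhds x, Syndetic {g : G | g • x ∈ U}

/-- `H` is a *subnormal* subgroup of `T`: there is a finite chain
`H = H₀ ◁ H₁ ◁ ⋯ ◁ Hₙ = T` with each term normal in the next. -/
def Subgroup.IsSubnormalChain {T : Type*} [Group T] (H : Subgroup T) : Prop :=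
  ∃ (n : ℕ) (c : Fin (n + 1) → Subgroup T),
    c 0 = H ∧ c (Fin.last n) = ⊤ ∧
      ∀ i : Fin n, c i.castSucc ≤ c i.succ ∧ ((c i.castSucc).subgroupOf (c i.succ)).Normal

/-- Transfer almost periodicity along a continuous surjective equivariant hom. -/
lemma ap_transfer {G G' X : Type*} [Group G] [Group G'] [TopologicalSpace G]
    [TopologicalSpace G'] [TopologicalSpace X] [MulAction G X] [MulAction G' X]
    (e : G →* G') (hc : Continuous e) (hs : Function.Surjective e)
    (hsmul : ∀ (g : G) (y : X), e g • y = g • y) {x : X}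
    (h : IsAlmostPeriodicPt G x) : IsAlmostPeriodicPt G' x := by
  intro U hU
  obtain ⟨K, hK, hKA⟩ := h U hU
  refine ⟨e '' K, hK.image hc, Set.eq_univ_of_univ_subset ?_⟩
  rintro g' -
  obtain ⟨g, rfl⟩ := hs g'
  have hg : g ∈ K⁻¹ * {g : G | g • x ∈ U} := hKA ▸ Set.mem_univ g
  obtain ⟨k, hk, a, ha, rfl⟩ := hg
  refine ⟨e k, ?_, e a, ?_, (map_mul e k a).symm⟩
  · simpa using Set.mem_image_of_mem e (Set.inv_mem_inv.2 hk)
  · simpa [Set.mem_setOf_eq, hsmul] using ha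

/-- Easy direction: a point of a compact invariant "minimal" set is almost periodic. -/
lemma ap_of_minimal {G X : Type*} [Group G] [TopologicalSpace G] [TopologicalSpace X]
    [MulAction G X] [ContinuousSMul G X] {M : Set X} (hM : IsCompact M)
    (hinv : ∀ g : G, g • M ⊆ M) {x : X} (hx : x ∈ M)
    (hmin : ∀ y ∈ M, x ∈ closure (orbit G y)) : IsAlmostPeriodicPt G x := by
  intro U hU
  obtain ⟨V, hVU, hVopen, hxV⟩ := mem_nhds_iff.1 hU
  have hcov : M ⊆ ⋃ g : G, (fun y => g • y) ⁻¹' V := by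
    intro y hy
    have hxc := hmin y hy
    have : V ∩ orbit G y ≠ ∅ := by
      rw [← Set.nonempty_iff_ne_empty]
      exact mem_closure_iff.1 hxc V hVopen hxV
    rw [← Set.nonempty_iff_ne_empty] at this
    obtain ⟨z, hzV, g, rfl⟩ := this
    exact Set.mem_iUnion.2 ⟨g, hzV⟩
  obtain ⟨t, ht⟩ := hM.elim_finite_subcover _
    (fun g : G => hVopen.preimage (continuous_const_smul g)) hcov
  refine ⟨(t : Set G), t.finite_toSet.isCompact, Set.eq_univ_of_univ_subset ?_⟩
  rintro g -
  have hgx : g • x ∈ M := hinv g ⟨x, hx, rfl⟩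
  obtain ⟨f, hf⟩ := Set.mem_iUnion.1 (ht hgx)
  obtain ⟨hft, hfv⟩ := Set.mem_iUnion.1 hf
  refine ⟨f⁻¹, Set.inv_mem_inv.2 hft, f * g, ?_, by group⟩
  simpa [Set.mem_setOf_eq, mul_smul] using hVU hfv

/-- Hard direction consequence: orbit closure of an a.p. point is minimal. -/
lemma minimal_of_ap {G X : Type*} [Group G] [TopologicalSpace G] [IsTopologicalGroup G]
    [TopologicalSpace X]
    [CompactSpace X] [T2Space X] [MulAction G X] [ContinuousSMul G X] {x : X}
    (h : IsAlmostPeriodicPt G x) :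
    ∀ y ∈ closure (orbit G x), x ∈ closure (orbit G y) := by
  intro y hy
  rw [mem_closure_iff]
  intro V hVopen hxV
  obtain ⟨U, hU, hUclosed, hUV⟩ := exists_mem_nhds_isClosed_subset (hVopen.mem_nhds hxV)
  obtain ⟨K, hK, hKA⟩ := h U hU
  set C : Set X := (fun p : G × X => p.1⁻¹ • p.2) '' (K ×ˢ U) with hC
  have hCcomp : IsCompact C := (hK.prod hUclosed.isCompact).image <| by
    exact (continuous_fst.inv).smul continuous_snd
  have horb : orbit G x ⊆ C := by
    rintro - ⟨g, rfl⟩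
    have hg : g ∈ K⁻¹ * {g : G | g • x ∈ U} := hKA ▸ Set.mem_univ g
    obtain ⟨k, hk, a, ha, rfl⟩ := hg
    exact ⟨(k⁻¹, a • x), ⟨Set.inv_mem_inv.1 (by simpa using hk), ha⟩, by
      simp [mul_smul]⟩
  have hyC : y ∈ C := (hCcomp.isClosed.closure_subset_iff.2 horb) hy
  obtain ⟨⟨k, u⟩, ⟨hkK, huU⟩, hku⟩ := hyC
  refine ⟨k • y, hUV (by rw [← hku]; simpa [smul_smul] using huU), k, rfl⟩

/-- Existence of a minimal nonempty closed invariant subset. -/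
lemma exists_minimal_invariant {G X : Type*} [Group G] [TopologicalSpace X] [CompactSpace X]
    [MulAction G X] {Y : Set X} (hY : IsClosed Y) (hYne : Y.Nonempty)
    (hYinv : ∀ g : G, g • Y ⊆ Y) :
    ∃ Z ⊆ Y, Z.Nonempty ∧ IsClosed Z ∧ (∀ g : G, g • Z ⊆ Z) ∧
      ∀ W ⊆ Z, W.Nonempty → IsClosed W → (∀ g : G, g • W ⊆ W) → W = Z := by
  set S : Set (Set X) := {Z | Z ⊆ Y ∧ Z.Nonempty ∧ IsClosed Z ∧ ∀ g : G, g • Z ⊆ Z} with hS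
  have hchain : ∀ c ⊆ S, IsChain (· ⊆ ·) c → c.Nonempty → ∃ lb ∈ S, ∀ s ∈ c, lb ⊆ s := by
    intro c hcS hchain hcne
    refine ⟨⋂₀ c, ⟨?_, ?_, ?_, ?_⟩, fun s hs => Set.sInter_subset_of_mem hs⟩
    · obtain ⟨s, hs⟩ := hcne
      exact (Set.sInter_subset_of_mem hs).trans (hcS hs).1
    · have : Nonempty c := hcne.to_subtype
      refine IsCompact.nonempty_sInter_of_directed_nonempty_isCompact_isClosed
        (IsChain.directedOn (r := (· ⊇ ·)) (fun a ha b hb hab => (hchain ha hb hab).symm))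
        (fun U hU => (hcS hU).2.1)
        (fun U hU => (hcS hU).2.2.1.isCompact) (fun U hU => (hcS hU).2.2.1)
    · exact isClosed_sInter fun U hU => (hcS hU).2.2.1
    · intro g z hz
      rw [Set.mem_sInter]
      intro U hU
      obtain ⟨w, hw, rfl⟩ := hz
      exact (hcS hU).2.2.2 g ⟨w, hw.out U hU, rfl⟩
  obtain ⟨m, hmY, hmS, hmmin⟩ := zorn_superset_nonempty S hchain Y ⟨le_refl Y, hYne, hY, hYinv⟩
  exact ⟨m, hmS.1, hmS.2.1, hmS.2.2.1, hmS.2.2.2, fun W hWm hWne hWcl hWinv =>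
    subset_antisymm hWm (hmmin ⟨hWm.trans hmS.1, hWne, hWcl, hWinv⟩ hWm)⟩

lemma subgroup_smul_set_eq {G X : Type*} [Group G] [MulAction G X] (N : Subgroup G)
    (n : ↥N) (s : Set X) : n • s = (n : G) • s := rfl

/-- Key step: almost periodicity passes to normal co-compact subgroups. -/
lemma ap_of_normal_cocompact {G X : Type*} [Group G] [TopologicalSpace G]
    [IsTopologicalGroup G] [TopologicalSpace X] [CompactSpace X] [T2Space X]
    [MulAction G X] [ContinuousSMul G X] (N : Subgroup G) [hNn : N.Normal]
    [hNc : CompactSpace (G ⧸ N)] {x : X} (hx : IsAlmostPeriodicPt G x) :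
    IsAlmostPeriodicPt N x := by
  classical
  set Y : Set X := closure (orbit G x) with hY
  have hYcl : IsClosed Y := isClosed_closure
  have hYinvEq : ∀ g : G, g • Y = Y := by
    intro g
    rw [hY, ← closure_smul, smul_orbit]
  have hxY : x ∈ Y := subset_closure (mem_orbit_self x)
  have hmin : ∀ y ∈ Y, Y ⊆ closure (orbit G y) := by
    intro y hy
    have hxc : x ∈ closure (orbit G y) := minimal_of_ap hx y hy
    rw [hY]
    refine closure_minimal ?_ isClosed_closure
    rintro - ⟨g, rfl⟩
    have h2 : g • closure (orbit G y) = closure (orbit G y) := by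
      rw [← closure_smul, smul_orbit]
    exact h2 ▸ Set.smul_mem_smul_set hxc
  have hconjmem : ∀ (g : G) (n : ↥N), g⁻¹ * (n : G) * g ∈ N := fun g n => by
    simpa using hNn.conj_mem _ n.2 g⁻¹
  -- minimal N-invariant subset of Y
  obtain ⟨Z, hZY, hZne, hZcl, hZinv, hZmin⟩ :=
    exists_minimal_invariant (G := ↥N) hYcl ⟨x, hxY⟩
      (fun n => by rw [subgroup_smul_set_eq, hYinvEq])
  have hZcomp : IsCompact Z := hZcl.isCompact
  have hZinv' : ∀ n : ↥N, (n : G) • Z ⊆ Z := by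
    intro n
    rw [← subgroup_smul_set_eq N n Z]
    exact hZinv n
  -- every element of N maps Z onto Z
  have hZeq : ∀ n : ↥N, (n : G) • Z = Z := by
    intro n
    refine hZmin _ (hZinv' n) (hZne.image _) (hZcl.smul _) ?_
    intro m
    rw [subgroup_smul_set_eq, smul_smul]
    have h1 : ((m : G) * n) • Z = (n : G) • (((n : G)⁻¹ * m * n) • Z) := by
      rw [smul_smul]
      congr 1
      group
    rw [h1]
    exact Set.smul_set_mono (hZinv' ⟨_, hconjmem (n : G) m⟩)
  -- cosets act well-definedly on Z
  have hcoset : ∀ g g' : G, (g : G ⧸ N) = (g' : G ⧸ N) → g • Z = g' • Z := by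
    intro g g' h
    have hmem : g⁻¹ * g' ∈ N := (QuotientGroup.eq).1 h
    have h2 : g' • Z = (g * (g⁻¹ * g')) • Z := by rw [mul_inv_cancel_left]
    rw [h2, ← smul_smul, hZeq ⟨_, hmem⟩]
  -- the closed "suspension" set
  set S : Set ((G ⧸ N) × X) := {p | ∃ g : G, (g : G ⧸ N) = p.1 ∧ p.2 ∈ g • Z} with hS
  have hScl : IsClosed S := by
    rw [← isOpen_compl_iff, isOpen_iff_mem_nhds]
    rintro ⟨c, y⟩ hcy
    obtain ⟨g, rfl⟩ := QuotientGroup.mk_surjective c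
    have hynot : y ∉ g • Z := fun h => hcy ⟨g, rfl, h⟩
    obtain ⟨O', O, hO'op, hOop, hO'Z, hyO, hdisj⟩ :=
      (hZcomp.smul g).separation_of_notMem hynot
    obtain ⟨V, W, hVop, hWop, hgV, hZW, hVW⟩ :=
      generalized_tube_lemma isCompact_singleton hZcomp
        (hO'op.preimage (continuous_smul (M := G) (X := X)))
        (by
          rintro ⟨v, z⟩ ⟨hv, hz⟩
          rcases hv with rfl
          exact hO'Z (Set.smul_mem_smul_set hz))
    refine Filter.mem_of_superset
      (IsOpen.mem_nhds ((QuotientGroup.isOpenMap_coe V hVop).prod hOop)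
        ⟨Set.mem_image_of_mem _ (hgV rfl), hyO⟩) ?_
    rintro ⟨c', y'⟩ ⟨⟨v, hvV, rfl⟩, hy'O⟩
    rintro ⟨g₁, hg₁, hy₁⟩
    have hg₁' : (g₁ : G ⧸ N) = (v : G ⧸ N) := hg₁
    have hvZ : y' ∈ v • Z := hcoset g₁ v hg₁' ▸ hy₁
    obtain ⟨z, hz, rfl⟩ := hvZ
    have h1 : v • z ∈ O' := Set.mem_preimage.1 (hVW (Set.mk_mem_prod hvV (hZW hz)))
    have h2 : v • z ∈ O := hy'O
    exact (Set.disjoint_left.1 hdisj h1) h2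
  -- the union of all translates of Z is closed, invariant, so contains x
  set P : Set X := Prod.snd '' S with hP
  have hPcl : IsClosed P := isClosedMap_snd_of_compactSpace S hScl
  have hPmem : ∀ (g : G), ∀ z ∈ Z, g • z ∈ P := by
    intro g z hz
    exact ⟨((g : G ⧸ N), g • z), ⟨g, rfl, Set.smul_mem_smul_set hz⟩, rfl⟩
  obtain ⟨z₀, hz₀⟩ := hZne
  have horbP : orbit G z₀ ⊆ P := by
    rintro - ⟨g, rfl⟩
    exact hPmem g z₀ hz₀
  have hxP : x ∈ P := by
    have hz₀Y : z₀ ∈ Y := hZY hz₀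
    exact (hPcl.closure_subset_iff.2 horbP) (hmin z₀ hz₀Y hxY)
  obtain ⟨p, hpS, hpx⟩ := hxP
  obtain ⟨g₀, hg₀, hxg₀⟩ := hpS
  rw [hpx] at hxg₀
  -- x lies in the N-minimal compact set g₀ • Z
  have hMcomp : IsCompact (g₀ • Z) := hZcomp.smul g₀
  have hMinv : ∀ n : ↥N, (n : G) • (g₀ • Z) = g₀ • Z := by
    intro n
    calc (n : G) • (g₀ • Z) = ((n : G) * g₀) • Z := by rw [smul_smul]
    _ = (g₀ * (g₀⁻¹ * (n : G) * g₀)) • Z := by congr 1; group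
    _ = g₀ • ((g₀⁻¹ * (n : G) * g₀) • Z) := by rw [← smul_smul]
    _ = g₀ • Z := by rw [hZeq ⟨_, hconjmem g₀ n⟩]
  have horbZ : ∀ z ∈ Z, closure (orbit ↥N z) = Z := by
    intro z hz
    refine hZmin _ (closure_minimal ?_ hZcl)
      ⟨z, subset_closure (mem_orbit_self z)⟩ isClosed_closure ?_
    · rintro - ⟨n, rfl⟩
      exact hZinv n (Set.smul_mem_smul_set hz)
    · intro n
      rw [← closure_smul, smul_orbit]
  have horbM : ∀ z ∈ Z, orbit ↥N (g₀ • z) = g₀ • orbit ↥N z := by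
    intro z hz
    apply Set.Subset.antisymm
    · rintro - ⟨n, rfl⟩
      have key : (n : G) • (g₀ • z) = g₀ • ((⟨_, hconjmem g₀ n⟩ : ↥N) • z) := by
        show (n : G) • g₀ • z = g₀ • (g₀⁻¹ * (n : G) * g₀) • z
        rw [smul_smul, smul_smul]
        congr 1
        group
      show (n : G) • (g₀ • z) ∈ g₀ • orbit ↥N z
      rw [key]
      exact Set.smul_mem_smul_set (mem_orbit _ _)
    · rintro - ⟨-, ⟨n, rfl⟩, rfl⟩
      have key : g₀ • ((n : G) • z) = (⟨_, hNn.conj_mem _ n.2 g₀⟩ : ↥N) • (g₀ • z) := by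
        show g₀ • (n : G) • z = (g₀ * (n : G) * g₀⁻¹) • g₀ • z
        rw [smul_smul, smul_smul]
        congr 1
        group
      show g₀ • ((n : G) • z) ∈ orbit ↥N (g₀ • z)
      rw [key]
      exact mem_orbit _ _
  have hminM : ∀ y ∈ g₀ • Z, x ∈ closure (orbit ↥N y) := by
    rintro - ⟨z, hz, rfl⟩
    show x ∈ closure (orbit ↥N (g₀ • z))
    rw [horbM z hz, closure_smul, horbZ z hz]
    exact hxg₀
  exact ap_of_minimal hMcomp
    (fun n => le_of_eq (by rw [subgroup_smul_set_eq, hMinv n])) hxg₀ hminM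

/-- Co-compactness passes to larger subgroups. -/
lemma compactSpace_quotient_of_le {T : Type*} [Group T] [TopologicalSpace T]
    {H K : Subgroup T} (h : H ≤ K) (hcc : CompactSpace (T ⧸ H)) :
    CompactSpace (T ⧸ K) := by
  let φ : T ⧸ H → T ⧸ K := Quotient.map' id (fun a b hab => by
    rw [QuotientGroup.leftRel_apply] at hab ⊢
    exact h hab)
  have hcont : Continuous φ := continuous_id.quotient_map' _
  have hsurj : Function.Surjective φ := fun q => by
    obtain ⟨t, rfl⟩ := QuotientGroup.mk_surjective q
    exact ⟨QuotientGroup.mk t, rfl⟩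
  constructor
  rw [← hsurj.range_eq]
  exact isCompact_range hcont

/-- Co-compactness passes to closed intermediate subgroups. -/
lemma compactSpace_quotient_subgroupOf {T : Type*} [Group T] [TopologicalSpace T]
    [IsTopologicalGroup T] {K G : Subgroup T} (hKG : K ≤ G) (hGcl : IsClosed (G : Set T))
    (hcc : CompactSpace (T ⧸ K)) : CompactSpace (↥G ⧸ K.subgroupOf G) := by
  classical
  set q : T → T ⧸ K := QuotientGroup.mk with hq
  have hmemG : ∀ {v g : T}, g ∈ G → q v = q g → v ∈ G := by
    intro v g hgG hvg
    have : v⁻¹ * g ∈ K := (QuotientGroup.eq).1 hvg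
    have hvK : g⁻¹ * v ∈ K := by simpa using K.inv_mem this
    have : g * (g⁻¹ * v) ∈ G := G.mul_mem hgG (hKG hvK)
    simpa [mul_inv_cancel_left] using this
  have hqGcl : IsClosed (q '' (G : Set T)) := by
    rw [← isOpen_compl_iff]
    have hcompl : (q '' (G : Set T))ᶜ = q '' ((G : Set T)ᶜ) := by
      ext c
      obtain ⟨t, rfl⟩ := QuotientGroup.mk_surjective c
      constructor
      · intro hc
        exact ⟨t, fun htG => hc ⟨t, htG, rfl⟩, rfl⟩
      · rintro ⟨v, hv, hvq⟩ ⟨g, hgG, hgq⟩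
        exact hv (hmemG hgG (hvq.trans hgq.symm))
    rw [hcompl]
    exact QuotientGroup.isOpenMap_coe _ hGcl.isOpen_compl
  have hqGcomp : IsCompact (q '' (G : Set T)) := hqGcl.isCompact
  constructor
  apply isCompact_of_finite_subcover
  intro ι U hUop hUcov
  have hpre : ∀ i, ∃ W : Set T, IsOpen W ∧
      Subtype.val ⁻¹' W = QuotientGroup.mk ⁻¹' (U i) := by
    intro i
    exact isOpen_induced_iff.1 ((hUop i).preimage continuous_quot_mk)
  choose W hWop hWeq using hpre
  have hcov : q '' (G : Set T) ⊆ ⋃ i, q '' W i := by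
    rintro - ⟨g, hgG, rfl⟩
    have : QuotientGroup.mk (⟨g, hgG⟩ : ↥G) ∈ ⋃ i, U i := by
      rw [Set.iUnion_eq_univ_iff.2 (fun y => ?_)]
      · trivial
      · obtain ⟨i, hi⟩ := Set.mem_iUnion.1 (hUcov (Set.mem_univ y))
        exact ⟨i, hi⟩
    obtain ⟨i, hi⟩ := Set.mem_iUnion.1 this
    have : (⟨g, hgG⟩ : ↥G) ∈ Subtype.val ⁻¹' W i := by rw [hWeq]; exact hi
    exact Set.mem_iUnion.2 ⟨i, Set.mem_image_of_mem _ this⟩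
  obtain ⟨t, ht⟩ := hqGcomp.elim_finite_subcover _
    (fun i => QuotientGroup.isOpenMap_coe _ (hWop i)) hcov
  refine ⟨t, fun c _ => ?_⟩
  obtain ⟨⟨g, hgG⟩, rfl⟩ := QuotientGroup.mk_surjective c
  have : q g ∈ ⋃ i ∈ t, q '' W i := ht ⟨g, hgG, rfl⟩
  simp only [Set.mem_iUnion] at this
  obtain ⟨i, hit, v, hvW, hvq⟩ := this
  have hvG : v ∈ G := hmemG hgG hvq
  have h1 : QuotientGroup.mk (⟨v, hvG⟩ : ↥G) ∈ U i := by
    have : (⟨v, hvG⟩ : ↥G) ∈ Subtype.val ⁻¹' W i := hvW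
    rw [hWeq] at this
    exact this
  have h2 : (QuotientGroup.mk (⟨v, hvG⟩ : ↥G) : ↥G ⧸ K.subgroupOf G) =
      QuotientGroup.mk (⟨g, hgG⟩ : ↥G) := by
    rw [QuotientGroup.eq]
    rw [Subgroup.mem_subgroupOf]
    exact (QuotientGroup.eq).1 hvq
  simp only [Set.mem_iUnion]
  exact ⟨i, hit, h2 ▸ h1⟩

lemma Subgroup.topologicalClosure_eq_of_isClosed {T : Type*} [Group T] [TopologicalSpace T]
    [IsTopologicalGroup T] {H : Subgroup T} (h : IsClosed (H : Set T)) :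
    H.topologicalClosure = H :=
  SetLike.ext' (by rw [Subgroup.topologicalClosure_coe, h.closure_eq])

lemma conj_mem_topologicalClosure {T : Type*} [Group T] [TopologicalSpace T]
    [IsTopologicalGroup T] {A B : Subgroup T}
    (h : ∀ g ∈ A, ∀ m ∈ B, g * m * g⁻¹ ∈ B) :
    ∀ g ∈ A.topologicalClosure, ∀ m ∈ B.topologicalClosure,
      g * m * g⁻¹ ∈ B.topologicalClosure := by
  have step1 : ∀ g ∈ A, Set.MapsTo (fun m : T => g * m * g⁻¹)
      (closure (B : Set T)) (closure (B : Set T)) := by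
    intro g hg
    have hmaps : Set.MapsTo (fun m : T => g * m * g⁻¹) (B : Set T) (B : Set T) :=
      fun m hm => h g hg m hm
    simpa using hmaps.closure (by continuity)
  intro g hg m hm
  rw [← SetLike.mem_coe, Subgroup.topologicalClosure_coe] at hg hm ⊢
  have step2 : Set.MapsTo (fun g : T => g * m * g⁻¹)
      (closure (A : Set T)) (closure (B : Set T)) := by
    have hmaps : Set.MapsTo (fun g : T => g * m * g⁻¹) (A : Set T)
        (closure (B : Set T)) := fun g hg => step1 g hg hm
    simpa using hmaps.closure (by continuity)
  exact step2 hg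


/-- If `H` is a subnormal co-compact closed subgroup of a Hausdorff topological group `T`
acting continuously on a compact Hausdorff space `X`, and `x` is almost periodic for `T`,
then `x` is almost periodic for the restricted action of `H`. -/
theorem almostPeriodic_of_subnormal_cocompact
    {T X : Type*} [Group T] [TopologicalSpace T] [IsTopologicalGroup T] [T2Space T]
    [TopologicalSpace X] [CompactSpace X] [T2Space X] [MulAction T X] [ContinuousSMul T X]
    (H : Subgroup T) (hHclosed : IsClosed (H : Set T))
    (hcc : CompactSpace (T ⧸ H)) (hsub : H.IsSubnormalChain)
    (x : X) (hx : IsAlmostPeriodicPt T x) :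
    IsAlmostPeriodicPt H x := by
  obtain ⟨n, c, hc0, hclast, hcstep⟩ := hsub
  set K : Fin (n + 1) → Subgroup T := fun i => (c i).topologicalClosure with hKdef
  have hKcl : ∀ i, IsClosed ((K i : Subgroup T) : Set T) :=
    fun i => Subgroup.isClosed_topologicalClosure _
  have hK0 : K 0 = H := by
    rw [hKdef]
    simp only [hc0]
    exact Subgroup.topologicalClosure_eq_of_isClosed hHclosed
  have hKlast : K (Fin.last n) = ⊤ := by
    rw [hKdef]
    simp only [hclast]
    exact Subgroup.topologicalClosure_eq_of_isClosed (by simp)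
  have hKle : ∀ i : Fin n, K i.castSucc ≤ K i.succ := by
    intro i g hg
    rw [← SetLike.mem_coe, Subgroup.topologicalClosure_coe] at hg ⊢
    exact closure_mono (fun y hy => (hcstep i).1 hy) hg
  have hHle : ∀ i : Fin (n + 1), H ≤ K i := by
    intro i
    induction i using Fin.induction with
    | zero => rw [hK0]
    | succ i ih => exact ih.trans (hKle i)
  have hKnorm : ∀ i : Fin n, ∀ g ∈ K i.succ, ∀ m ∈ K i.castSucc,
      g * m * g⁻¹ ∈ K i.castSucc := by
    intro i
    refine conj_mem_topologicalClosure ?_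
    intro g hg m hm
    have hmem : (⟨m, (hcstep i).1 hm⟩ : ↥(c i.succ)) ∈ (c i.castSucc).subgroupOf (c i.succ) :=
      Subgroup.mem_subgroupOf.2 hm
    have := (hcstep i).2.conj_mem _ hmem ⟨g, hg⟩
    rw [Subgroup.mem_subgroupOf] at this
    simpa using this
  have hcompact : ∀ i : Fin (n + 1), CompactSpace (T ⧸ K i) :=
    fun i => compactSpace_quotient_of_le (hHle i) hcc
  have main : ∀ i : Fin (n + 1), IsAlmostPeriodicPt ↥(K i) x := by
    intro i
    induction i using Fin.reverseInduction with
    | last =>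
      rw [hKlast]
      refine ap_transfer (Subgroup.topEquiv.symm.toMonoidHom)
        ?_ ?_ (fun g y => rfl) hx
      · exact continuous_id.subtype_mk _
      · exact Subgroup.topEquiv.symm.surjective
    | cast i ih =>
      set N : Subgroup ↥(K i.succ) := (K i.castSucc).subgroupOf (K i.succ) with hN
      haveI hNnormal : N.Normal := by
        constructor
        intro m hm g
        rw [hN, Subgroup.mem_subgroupOf] at hm ⊢
        have := hKnorm i (g : T) g.2 (m : T) hm
        simpa using this
      haveI : CompactSpace (↥(K i.succ) ⧸ N) :=
        compactSpace_quotient_subgroupOf (hKle i) (hKcl i.succ) (hcompact i.castSucc)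
      have hNap : IsAlmostPeriodicPt ↥N x := ap_of_normal_cocompact N ih
      refine ap_transfer ((Subgroup.subgroupOfEquivOfLe (hKle i)).toMonoidHom)
        ?_ ?_ (fun g y => rfl) hNap
      · exact Continuous.subtype_mk (continuous_subtype_val.comp continuous_subtype_val) _
      · exact (Subgroup.subgroupOfEquivOfLe (hKle i)).surjective
  have := main 0
  rwa [hK0] at this
end

section
/- Let T be a Hausdorff topological group acting continuously on a compact Hausdorff space X, and let H be a co-compact closed subgroup of T. If a point x ∈ X is almost periodic for the restricted action of H, then x is almost periodic for the action of T. -/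
open MulAction Pointwise

/-- If `x` is an almost periodic point, then `x` belongs to the closure of the orbit of
any point of the closure of its own orbit (i.e. the orbit closure of `x` is minimal). -/
theorem ap_mem_closure_orbit {G X : Type*} [Group G] [TopologicalSpace G]
    [TopologicalSpace X] [CompactSpace X] [T2Space X] [MulAction G X] [ContinuousSMul G X]
    {x : X} (hx : IsAlmostPeriodicPt G x) {y : X}
    (hy : y ∈ closure (MulAction.orbit G x)) :
    x ∈ closure (MulAction.orbit G y) := by
  rw [mem_closure_iff_nhds]
  intro U hU
  obtain ⟨V, hV, hVclosed, hVU⟩ := exists_mem_nhds_isClosed_subset hU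
  obtain ⟨K, hKcomp, hK⟩ := hx V hV
  set C : Set (G × X) := {p | p.1 • p.2 ∈ V} ∩ K ×ˢ (Set.univ : Set X) with hCdef
  have hCcomp : IsCompact C := by
    apply IsCompact.inter_left (hKcomp.prod isCompact_univ)
    exact hVclosed.preimage (continuous_fst.smul continuous_snd)
  have hD : IsClosed (Prod.snd '' C) := (hCcomp.image continuous_snd).isClosed
  have horb : MulAction.orbit G x ⊆ Prod.snd '' C := by
    rintro _ ⟨g, rfl⟩
    have hg : g ∈ K⁻¹ * {h : G | h • x ∈ V} := by
      have := Set.mem_univ g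
      rwa [← hK] at this
    obtain ⟨k', hk', a, ha, hka⟩ := hg
    refine ⟨(k'⁻¹, g • x), ⟨?_, ?_⟩, rfl⟩
    · show k'⁻¹ • g • x ∈ V
      have hrw : k'⁻¹ * g = a := by rw [← hka]; group
      rw [smul_smul, hrw]
      exact ha
    · exact Set.mk_mem_prod (Set.mem_inv.mp hk') (Set.mem_univ _)
  have hyD : y ∈ Prod.snd '' C := by
    have : closure (MulAction.orbit G x) ⊆ Prod.snd '' C := by
      rw [← hD.closure_eq]; exact closure_mono horb
    exact this hy
  obtain ⟨⟨k, z⟩, ⟨hkz, hkK⟩, rfl⟩ := hyD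
  exact ⟨k • z, hVU hkz, ⟨k, rfl⟩⟩

/-- If `H` is a co-compact closed subgroup of a Hausdorff topological group `T`
acting continuously on a compact Hausdorff space `X`, and `x` is almost periodic for the
restricted action of `H`, then `x` is almost periodic for `T`. -/
theorem almostPeriodic_of_cocompact_subgroup_almostPeriodic
    {T X : Type*} [Group T] [TopologicalSpace T] [IsTopologicalGroup T] [T2Space T]
    [TopologicalSpace X] [CompactSpace X] [T2Space X] [MulAction T X] [ContinuousSMul T X]
    (H : Subgroup T) (hHclosed : IsClosed (H : Set T)) (hcc : CompactSpace (T ⧸ H))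
    (x : X) (hx : IsAlmostPeriodicPt H x) :
    IsAlmostPeriodicPt T x := by
  classical
  set Y : Set X := closure (MulAction.orbit (↥H) x) with hYdef
  -- Y is H-invariant
  have hYinv : ∀ h : ↥H, ∀ z ∈ Y, (h : T) • z ∈ Y := by
    intro h z hz
    have h1 : (h : T) • z = h • z := rfl
    rw [h1, hYdef]
    have hmem := Set.mem_image_of_mem (fun w : X => h • w) hz
    have h2 := image_closure_subset_closure_image (continuous_const_smul h) hmem
    refine closure_mono ?_ h2
    rintro _ ⟨_, ⟨g, rfl⟩, rfl⟩
    refine ⟨h * g, ?_⟩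
    show (h * g) • x = h • (g • x)
    rw [mul_smul]
  -- The saturated closed set W and its image F in (T ⧸ H) × X
  set W : Set (T × X) := {p | p.1⁻¹ • p.2 ∈ Y} with hWdef
  have hWclosed : IsClosed W :=
    isClosed_closure.preimage ((continuous_fst.inv).smul continuous_snd)
  set q : T × X → (T ⧸ H) × X := Prod.map (QuotientGroup.mk : T → T ⧸ H) id with hqdef
  have hq : IsOpenQuotientMap q :=
    QuotientGroup.isOpenQuotientMap_mk.prodMap IsOpenQuotientMap.id
  set F : Set ((T ⧸ H) × X) := q '' W with hFdef
  have hsat : q ⁻¹' F = W := by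
    apply Set.Subset.antisymm
    · rintro ⟨t, z⟩ hmem
      obtain ⟨⟨t', z'⟩, hW', heq⟩ := hmem
      have h1 : (QuotientGroup.mk t' : T ⧸ H) = QuotientGroup.mk t :=
        congrArg Prod.fst heq
      have h2 : z' = z := congrArg Prod.snd heq
      have hmemH : t'⁻¹ * t ∈ H := (QuotientGroup.eq).mp h1
      have : t⁻¹ • z = ((⟨t'⁻¹ * t, hmemH⟩ : H) : T)⁻¹ • (t'⁻¹ • z') := by
        rw [h2, smul_smul]
        congr 1
        group
      show t⁻¹ • z ∈ Y
      rw [this]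
      exact hYinv (⟨t'⁻¹ * t, hmemH⟩ : H)⁻¹ _ hW'
    · exact Set.subset_preimage_image q W
  have hFclosed : IsClosed F := by
    rw [← hq.isQuotientMap.isClosed_preimage, hsat]
    exact hWclosed
  -- Z, the union of the translates of Y, is closed
  set Z : Set X := Prod.snd '' F with hZdef
  have hZclosed : IsClosed Z := by
    haveI : CompactSpace (T ⧸ H) := hcc
    exact isClosedMap_snd_of_compactSpace F hFclosed
  have hZmem : ∀ z : X, z ∈ Z ↔ ∃ t : T, t⁻¹ • z ∈ Y := by
    intro z
    constructor
    · rintro ⟨⟨c, z'⟩, ⟨⟨t, w⟩, hWmem, heq⟩, rfl⟩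
      have h2 : w = z' := congrArg Prod.snd heq
      exact ⟨t, by rw [← h2]; exact hWmem⟩
    · rintro ⟨t, ht⟩
      exact ⟨q (t, z), ⟨(t, z), ht, rfl⟩, rfl⟩
  have hxZ : x ∈ Z := by
    rw [hZmem]
    exact ⟨1, by simpa using subset_closure (MulAction.mem_orbit_self x)⟩
  have hZinv : ∀ s : T, ∀ z ∈ Z, s • z ∈ Z := by
    intro s z hz
    rw [hZmem] at hz ⊢
    obtain ⟨t, ht⟩ := hz
    refine ⟨s * t, ?_⟩
    rw [mul_inv_rev, mul_smul, inv_smul_smul]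
    exact ht
  -- Every point of Z has x in the closure of its T-orbit
  have hmin : ∀ z ∈ Z, x ∈ closure (MulAction.orbit T z) := by
    intro z hz
    obtain ⟨t, ht⟩ := (hZmem z).mp hz
    have hxcl : x ∈ closure (MulAction.orbit (↥H) (t⁻¹ • z)) :=
      ap_mem_closure_orbit hx ht
    have hsub : MulAction.orbit (↥H) (t⁻¹ • z) ⊆ MulAction.orbit T z := by
      rintro _ ⟨g, rfl⟩
      refine ⟨(g : T) * t⁻¹, ?_⟩
      show ((g : T) * t⁻¹) • z = g • (t⁻¹ • z)
      rw [mul_smul]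
      rfl
    exact closure_mono hsub hxcl
  -- Finite subcover argument
  intro U hU
  have hU' : interior U ∈ nhds x := interior_mem_nhds.mpr hU
  have hcover : Z ⊆ ⋃ g : T, (fun z : X => g • z) ⁻¹' interior U := by
    intro z hz
    obtain ⟨w, hwU, g, rfl⟩ := mem_closure_iff_nhds.mp (hmin z hz) (interior U) hU'
    exact Set.mem_iUnion.mpr ⟨g, hwU⟩
  obtain ⟨s, hs⟩ := hZclosed.isCompact.elim_finite_subcover
    (fun g : T => (fun z : X => g • z) ⁻¹' interior U)
    (fun g => isOpen_interior.preimage (continuous_const_smul g)) hcover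
  refine ⟨(s : Set T), s.finite_toSet.isCompact, ?_⟩
  rw [Set.eq_univ_iff_forall]
  intro g
  have hgx : g • x ∈ Z := hZinv g x hxZ
  obtain ⟨f, hfs, hf⟩ := Set.mem_iUnion₂.mp (hs hgx)
  have hfU : (f * g) • x ∈ U := by
    have : f • g • x ∈ interior U := hf
    rw [← mul_smul] at this
    exact interior_subset this
  exact Set.mem_mul.mpr ⟨f⁻¹, Set.mem_inv.mpr (by simpa using hfs), f * g, hfU, by group⟩
end

section
/- Let T be a Hausdorff topological group acting continuously on a locally compact Hausdorff space X (not necessarily compact), and let H be a co-compact closed subgroup of T. If x ∈ X is almost periodic for the restricted action of H, then the orbit closure cl(T·x) is compact and is a minimal set for the action of T (every T-orbit in cl(T·x) is dense in cl(T·x)). -/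
open MulAction Pointwise

/-- Tube lemma for group actions: if `s₀ • C ⊆ O` with `C` compact and `O` open, then the
same holds for all `s` in a neighborhood of `s₀`. -/
lemma tube_open_aux {T X : Type*} [Group T] [TopologicalSpace T]
    [TopologicalSpace X] [MulAction T X] [ContinuousSMul T X]
    {C O : Set X} (hC : IsCompact C) (hO : IsOpen O) {s₀ : T} (h : s₀ • C ⊆ O) :
    ∃ u : Set T, IsOpen u ∧ s₀ ∈ u ∧ ∀ s ∈ u, s • C ⊆ O := by
  have hsub : ({s₀} : Set T) ×ˢ C ⊆ (fun p : T × X => p.1 • p.2) ⁻¹' O := by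
    rintro ⟨s, c⟩ ⟨hs, hc⟩
    simp only [Set.mem_singleton_iff] at hs
    subst hs
    exact h (Set.smul_mem_smul_set hc)
  obtain ⟨u, v, hu, hv, hsu, hCv, huv⟩ :=
    generalized_tube_lemma isCompact_singleton hC
      (hO.preimage continuous_smul) hsub
  refine ⟨u, hu, hsu rfl, fun s hs => ?_⟩
  rintro _ ⟨c, hc, rfl⟩
  exact huv (Set.mk_mem_prod hs (hCv hc))

/-- If `T/H` is compact and `C` is an `H`-invariant compact set, then from any family of
open sets `O t ⊇ t • C` one can select finitely many such that every translate `g • C`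
is contained in one of them. -/
lemma tube_finite_aux {T X : Type*} [Group T] [TopologicalSpace T] [IsTopologicalGroup T]
    [TopologicalSpace X] [MulAction T X] [ContinuousSMul T X]
    (H : Subgroup T) (hcc : CompactSpace (T ⧸ H))
    {C : Set X} (hC : IsCompact C) (hinv : ∀ g ∈ H, g • C = C)
    (O : T → Set X) (hOopen : ∀ t, IsOpen (O t)) (hmem : ∀ t, t • C ⊆ O t) :
    ∃ s : Finset T, ∀ g : T, ∃ t ∈ s, g • C ⊆ O t := by
  choose u huo hum hu using fun t => tube_open_aux hC (hOopen t) (hmem t)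
  have hcov : Set.univ ⊆ ⋃ t : T, ((↑) : T → T ⧸ H) '' u t := by
    intro q _
    obtain ⟨g, rfl⟩ := QuotientGroup.mk_surjective q
    exact Set.mem_iUnion.2 ⟨g, Set.mem_image_of_mem _ (hum g)⟩
  obtain ⟨s, hs⟩ := isCompact_univ.elim_finite_subcover _
    (fun t => QuotientGroup.isOpenMap_coe _ (huo t)) hcov
  refine ⟨s, fun g => ?_⟩
  have hmem2 : (g : T ⧸ H) ∈ ⋃ t ∈ s, ((↑) : T → T ⧸ H) '' u t := hs (Set.mem_univ _)
  obtain ⟨t, hts, g', hg'u, hgg'⟩ := by simpa using hmem2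
  refine ⟨t, hts, ?_⟩
  have hh : g'⁻¹ * g ∈ H := QuotientGroup.eq.1 hgg'
  have hg : g = g' * (g'⁻¹ * g) := by group
  rw [hg, mul_smul, hinv _ hh]
  exact hu t g' hg'u

/-- If `T` is a Hausdorff topological group acting continuously on a locally compact
Hausdorff space `X`, `H` is a co-compact closed subgroup of `T`, and `x` is almost
periodic for the restricted `H`-action, then `cl(T·x)` is compact and is a minimal set
for the `T`-action. -/
theorem orbitClosure_compact_minimal_of_cocompact
    {T X : Type*} [Group T] [TopologicalSpace T] [IsTopologicalGroup T] [T2Space T]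
    [TopologicalSpace X] [LocallyCompactSpace X] [T2Space X]
    [MulAction T X] [ContinuousSMul T X]
    (H : Subgroup T) (hHclosed : IsClosed (H : Set T)) (hcc : CompactSpace (T ⧸ H))
    (x : X) (hx : IsAlmostPeriodicPt H x) :
    IsCompact (closure (orbit T x)) ∧
      ∀ y ∈ closure (orbit T x), closure (orbit T y) = closure (orbit T x) := by
  set C : Set X := closure (orbit H x) with hC
  -- Key consequence of almost periodicity: for any compact neighborhood `U` of `x`,
  -- `C ⊆ L • U` for a compact `L ⊆ H`.
  have keyA : ∀ U : Set X, U ∈ nhds x → IsCompact U →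
      ∃ L : Set T, IsCompact L ∧ (∀ g ∈ L, g ∈ H) ∧ C ⊆ L • U := by
    intro U hU hUc
    obtain ⟨K, hK, hKA⟩ := hx U hU
    refine ⟨Subtype.val '' K⁻¹, hK.inv.image continuous_subtype_val,
      ?_, ?_⟩
    · rintro _ ⟨a, _, rfl⟩; exact a.2
    · have horb : orbit H x ⊆ (Subtype.val '' K⁻¹ : Set T) • U := by
        rintro _ ⟨h, rfl⟩
        have : (h : ↥H) ∈ K⁻¹ * {g : ↥H | g • x ∈ U} := hKA ▸ Set.mem_univ h
        obtain ⟨a, ha, b, hb, rfl⟩ := this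
        have hmem' : (a : T) • (b • x) ∈ (Subtype.val '' K⁻¹ : Set T) • U :=
          Set.smul_mem_smul (Set.mem_image_of_mem _ ha) hb
        simpa [mul_smul, Subgroup.smul_def] using hmem'
      have hcpt : IsCompact ((Subtype.val '' K⁻¹ : Set T) • U) :=
        (hK.inv.image continuous_subtype_val).smul_set hUc
      exact closure_minimal horb hcpt.isClosed
  -- `C` is compact.
  obtain ⟨U₀, hU₀c, hU₀⟩ := exists_compact_mem_nhds x
  obtain ⟨L₀, hL₀c, _, hCL₀⟩ := keyA U₀ hU₀ hU₀c
  have hCcpt : IsCompact C := (hL₀c.smul_set hU₀c).of_isClosed_subset isClosed_closure hCL₀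
  have hxC : x ∈ C := subset_closure (mem_orbit_self x)
  -- `C` is `H`-invariant.
  have horbsub : ∀ g ∈ H, g • orbit H x ⊆ orbit H x := by
    rintro g hg _ ⟨_, ⟨h, rfl⟩, rfl⟩
    have hmem' := mem_orbit x (⟨g, hg⟩ * h : ↥H)
    simpa [mul_smul] using hmem'
  have hCinv : ∀ g ∈ H, g • C = C := by
    intro g hg
    have h1 : g • orbit H x = orbit H x := by
      refine le_antisymm (horbsub g hg) ?_
      have := Set.smul_set_mono (horbsub g⁻¹ (inv_mem hg)) (a := g)
      rwa [smul_inv_smul] at this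
    rw [hC, ← closure_smul, h1]
  -- minimality within `C`: every nonempty closed `H`-invariant subset of `C` contains `x`.
  have hmin : ∀ M : Set X, M ⊆ C → M.Nonempty → IsClosed M →
      (∀ g ∈ H, g • M ⊆ M) → x ∈ M := by
    intro M hMC hMne hMcl hMinv
    by_contra hxM
    obtain ⟨U, hUnhds, hUsub, hUc⟩ := local_compact_nhds (hMcl.isOpen_compl.mem_nhds hxM)
    obtain ⟨L, hLc, hLH, hCL⟩ := keyA U hUnhds hUc
    obtain ⟨m, hm⟩ := hMne
    obtain ⟨g, hgL, u, hu, hgu⟩ := hCL (hMC hm)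
    have hginv : g⁻¹ • m ∈ M := hMinv g⁻¹ (inv_mem (hLH g hgL)) ⟨m, hm, rfl⟩
    have : g⁻¹ • m = u := by rw [← hgu, inv_smul_smul]
    exact hUsub hu (this ▸ hginv)
  -- closures of `T`-orbits are `T`-invariant
  have clinv : ∀ (t : T) (y : X), t • closure (orbit T y) = closure (orbit T y) := by
    intro t y
    rw [← closure_smul, smul_orbit]
  -- compactness of the big orbit closure
  have htC : ∀ t : T, IsCompact (t • C) := fun t => hCcpt.smul t
  choose N hNc hNint using fun t => exists_compact_superset (htC t)
  obtain ⟨s₀, hs₀⟩ := tube_finite_aux H hcc hCcpt hCinv (fun t => interior (N t))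
    (fun t => isOpen_interior) hNint
  have hEsub : closure (orbit T x) ⊆ ⋃ t ∈ s₀, N t := by
    refine closure_minimal ?_ (s₀.finite_toSet.isClosed_biUnion fun t _ => (hNc t).isClosed)
    rintro _ ⟨g, rfl⟩
    obtain ⟨t, hts, hsub⟩ := hs₀ g
    exact Set.mem_biUnion hts (interior_subset (hsub (Set.smul_mem_smul_set hxC)))
  have hEcpt : IsCompact (closure (orbit T x)) :=
    (s₀.finite_toSet.isCompact_biUnion fun t _ => hNc t).of_isClosed_subset
      isClosed_closure hEsub
  refine ⟨hEcpt, fun y hy => ?_⟩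
  set D : Set X := closure (orbit T y) with hD
  have hEinv : ∀ (t : T), ∀ z ∈ closure (orbit T x), t • z ∈ closure (orbit T x) := by
    intro t z hz
    rw [← clinv t x]
    exact Set.smul_mem_smul_set hz
  have hDinv : ∀ (t : T), ∀ z ∈ D, t • z ∈ D := by
    intro t z hz
    rw [hD, ← clinv t y]
    exact Set.smul_mem_smul_set hz
  have hDE : D ⊆ closure (orbit T x) := by
    refine closure_minimal ?_ isClosed_closure
    rintro _ ⟨t, rfl⟩
    exact hEinv t y hy
  have hDcpt : IsCompact D := hEcpt.of_isClosed_subset isClosed_closure hDE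
  have hyD : y ∈ D := subset_closure (mem_orbit_self y)
  -- `D ∩ C` is nonempty
  have hDC : (D ∩ C).Nonempty := by
    by_contra hemp
    rw [Set.not_nonempty_iff_eq_empty] at hemp
    have hdisj : ∀ t : T, Disjoint D (t • C) := by
      intro t
      rw [Set.disjoint_left]
      rintro z hzD ⟨c, hc, rfl⟩
      have hcD : c ∈ D := by
        have h3 : t⁻¹ • (t • c) ∈ D := hDinv t⁻¹ _ hzD
        rwa [inv_smul_smul] at h3
      exact Set.eq_empty_iff_forall_notMem.1 hemp c ⟨hcD, hc⟩
    choose U O hUo hOo hDU htCO hUO using fun t =>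
      SeparatedNhds.of_isCompact_isCompact hDcpt (htC t) (hdisj t)
    obtain ⟨s₁, hs₁⟩ := tube_finite_aux H hcc hCcpt hCinv O hOo htCO
    have hU'open : IsOpen (⋂ t ∈ s₁, U t) := isOpen_biInter_finset fun t _ => hUo t
    have hyU' : y ∈ ⋂ t ∈ s₁, U t := Set.mem_biInter fun t _ => hDU t hyD
    obtain ⟨z, hzU', hzorb⟩ := mem_closure_iff.1 hy _ hU'open hyU'
    obtain ⟨g, rfl⟩ := hzorb
    obtain ⟨t, hts, hsub⟩ := hs₁ g
    have h1 : g • x ∈ O t := hsub (Set.smul_mem_smul_set hxC)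
    have h2 : g • x ∈ U t := Set.mem_iInter₂.1 hzU' t hts
    exact Set.disjoint_left.1 (hUO t) h2 h1
  -- apply `hmin` to `D ∩ C`
  have hxD : x ∈ D := by
    refine Set.inter_subset_left (s := D) (t := C) (hmin (D ∩ C) Set.inter_subset_right hDC
      (isClosed_closure.inter isClosed_closure) ?_)
    rintro g hg _ ⟨z, ⟨hzD, hzC⟩, rfl⟩
    refine ⟨hDinv g z hzD, ?_⟩
    rw [← hCinv g hg]
    exact Set.smul_mem_smul_set hzC
  have hED : closure (orbit T x) ⊆ D := by
    refine closure_minimal ?_ isClosed_closure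
    rintro _ ⟨t, rfl⟩
    exact hDinv t x hxD
  exact le_antisymm hDE hED
end

section
/- Let T be a Hausdorff topological group acting continuously and minimally on a compact Hausdorff space X. Let H be a closed subgroup of T admitting a subnormal chain H = H₀ ◁ H₁ ◁ ⋯ ◁ Hₙ = T in which H₀ is co-compact in T and the index [H_{i+1} : H_i] is finite for all 1 ≤ i < n. Then the orbit-closure map 𝒪_H : X → 2^X, x ↦ cl(H·x), is continuous with respect to the Vietoris topology on 2^X. -/
open MulAction Pointwise

/-- The *Vietoris topology* on the hyperspace `2^X` of nonempty closed subsets of `X`,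
generated by the sets `{A | A ⊆ U}` and `{A | A ∩ U ≠ ∅}` for `U` open in `X`. -/
def VietorisTopology (X : Type*) [TopologicalSpace X] :
    TopologicalSpace {A : Set X // A.Nonempty ∧ IsClosed A} :=
  TopologicalSpace.generateFrom
    ({s | ∃ U : Set X, IsOpen U ∧ s = {A : {A : Set X // A.Nonempty ∧ IsClosed A} | ↑A ⊆ U}} ∪
     {s | ∃ U : Set X, IsOpen U ∧
        s = {A : {A : Set X // A.Nonempty ∧ IsClosed A} | ((A : Set X) ∩ U).Nonempty}})

set_option linter.unusedSectionVars false

namespace OCAux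

open Set Filter Topology TopologicalSpace

variable {T : Type*} [Group T] [TopologicalSpace T] [IsTopologicalGroup T]
variable {Z : Type*} [TopologicalSpace Z] [CompactSpace Z] [T2Space Z]
  [MulAction T Z] [ContinuousSMul T Z]

/-- Elementwise invariance of a set under a subgroup. -/
def SubInv (G : Subgroup T) (S : Set Z) : Prop := ∀ g ∈ G, ∀ z ∈ S, g • z ∈ S

/-- `M` is a minimal nonempty closed `G`-invariant set. -/
def IsMinSet (G : Subgroup T) (M : Set Z) : Prop :=
  M.Nonempty ∧ IsClosed M ∧ SubInv G M ∧
    ∀ S : Set Z, S ⊆ M → S.Nonempty → IsClosed S → SubInv G S → S = M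

lemma mem_orbit_sub {G : Subgroup T} {z y : Z} : y ∈ orbit G z ↔ ∃ g ∈ G, g • z = y := by
  constructor
  · rintro ⟨g, rfl⟩; exact ⟨g, g.2, rfl⟩
  · rintro ⟨g, hg, rfl⟩; exact ⟨⟨g, hg⟩, rfl⟩

lemma subInv_closure_orbit (G : Subgroup T) (z : Z) : SubInv G (closure (orbit G z)) := by
  intro g hg y hy
  have h1 : (fun w : Z => g • w) '' closure (orbit G z)
      ⊆ closure ((fun w : Z => g • w) '' orbit G z) :=
    image_closure_subset_closure_image (continuous_const_smul g)
  have h2 : (fun w : Z => g • w) '' orbit G z ⊆ orbit G z := by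
    rintro _ ⟨w, hw, rfl⟩
    rcases mem_orbit_sub.mp hw with ⟨g', hg', rfl⟩
    exact mem_orbit_sub.mpr ⟨g * g', mul_mem hg hg', by simp [mul_smul]⟩
  exact closure_mono h2 (h1 ⟨y, hy, rfl⟩)

lemma IsMinSet.closure_orbit_eq {G : Subgroup T} {M : Set Z} (h : IsMinSet G M) {z : Z}
    (hz : z ∈ M) : closure (orbit G z) = M := by
  obtain ⟨hne, hcl, hinv, hmin⟩ := h
  refine hmin _ (closure_minimal ?_ hcl) ⟨z, subset_closure (mem_orbit_self z)⟩
    isClosed_closure (subInv_closure_orbit G z)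
  intro y hy
  rcases mem_orbit_sub.mp hy with ⟨g, hg, rfl⟩
  exact hinv g hg z hz

lemma IsMinSet.eq_of_inter {G : Subgroup T} {M₁ M₂ : Set Z} (h₁ : IsMinSet G M₁)
    (h₂ : IsMinSet G M₂) (hne : (M₁ ∩ M₂).Nonempty) : M₁ = M₂ := by
  have e₁ : M₁ ∩ M₂ = M₁ := h₁.2.2.2 _ inter_subset_left hne (h₁.2.1.inter h₂.2.1)
    (fun g hg z hz => ⟨h₁.2.2.1 g hg z hz.1, h₂.2.2.1 g hg z hz.2⟩)
  have e₂ : M₁ ∩ M₂ = M₂ := h₂.2.2.2 _ inter_subset_right hne (h₁.2.1.inter h₂.2.1)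
    (fun g hg z hz => ⟨h₁.2.2.1 g hg z hz.1, h₂.2.2.1 g hg z hz.2⟩)
  rw [← e₁]; exact e₂

lemma IsMinSet.smul_set {G : Subgroup T} {M : Set Z} (h : IsMinSet G M) {k : T}
    (hc : ∀ g ∈ G, k * g * k⁻¹ ∈ G) (hc' : ∀ g ∈ G, k⁻¹ * g * k ∈ G) :
    IsMinSet G (k • M) := by
  refine ⟨h.1.smul_set, h.2.1.smul k, ?_, ?_⟩
  · rintro g hg _ ⟨m, hm, rfl⟩
    have e : g • (k • m) = k • ((k⁻¹ * g * k) • m) := by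
      rw [smul_smul, smul_smul]; congr 1; group
    show g • (k • m) ∈ k • M
    rw [e]
    exact Set.smul_mem_smul_set (h.2.2.1 _ (hc' g hg) m hm)
  · intro S hS hSne hScl hSinv
    have h1 : k⁻¹ • S ⊆ M := by
      rintro _ ⟨s, hs, rfl⟩
      rcases hS hs with ⟨m, hm, rfl⟩
      show k⁻¹ • k • m ∈ M
      rwa [inv_smul_smul]
    have h2 : SubInv G (k⁻¹ • S) := by
      rintro g hg _ ⟨s, hs, rfl⟩
      have e : g • (k⁻¹ • s) = k⁻¹ • ((k * g * k⁻¹) • s) := by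
        rw [smul_smul, smul_smul]; congr 1; group
      show g • (k⁻¹ • s) ∈ k⁻¹ • S
      rw [e]
      exact Set.smul_mem_smul_set (hSinv _ (hc g hg) s hs)
    have h3 := h.2.2.2 _ h1 (hSne.smul_set) (hScl.smul k⁻¹) h2
    calc S = k • k⁻¹ • S := (smul_inv_smul k S).symm
    _ = k • M := by rw [h3]

lemma exists_isMinSet (G : Subgroup T) {A : Set Z} (hA : IsClosed A) (hAne : A.Nonempty)
    (hAinv : SubInv G A) : ∃ M, M ⊆ A ∧ IsMinSet G M := by
  have hch : ∀ c ⊆ {S : Set Z | S.Nonempty ∧ IsClosed S ∧ SubInv G S},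
      IsChain (· ⊆ ·) c → c.Nonempty →
      ∃ lb ∈ {S : Set Z | S.Nonempty ∧ IsClosed S ∧ SubInv G S}, ∀ s ∈ c, lb ⊆ s := by
    intro c hc hchain hcne
    haveI : Nonempty c := hcne.to_subtype
    have hdir : DirectedOn (· ⊇ ·) c := fun a ha b hb => by
      rcases hchain.total ha hb with h | h
      · exact ⟨a, ha, Subset.rfl, h⟩
      · exact ⟨b, hb, h, Subset.rfl⟩
    have hne : (⋂₀ c).Nonempty :=
      IsCompact.nonempty_sInter_of_directed_nonempty_isCompact_isClosed hdir
        (fun U hU => (hc hU).1) (fun U hU => (hc hU).2.1.isCompact)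
        (fun U hU => (hc hU).2.1)
    refine ⟨⋂₀ c, ⟨hne, isClosed_sInter fun S hS => (hc hS).2.1, ?_⟩,
      fun s hs => sInter_subset_of_mem hs⟩
    intro g hg z hz
    exact mem_sInter.mpr fun S hS => (hc hS).2.2 g hg z (mem_sInter.mp hz S hS)
  obtain ⟨M, hMA, hMmin⟩ := zorn_superset_nonempty
    {S : Set Z | S.Nonempty ∧ IsClosed S ∧ SubInv G S} hch A ⟨hAne, hA, hAinv⟩
  refine ⟨M, hMA, hMmin.prop.1, hMmin.prop.2.1, hMmin.prop.2.2, ?_⟩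
  intro S hS hSne hScl hSinv
  exact Subset.antisymm hS (hMmin.2 ⟨hSne, hScl, hSinv⟩ hS)

/-- Key compactness lemma: if `T ⧸ H` is compact, `K` is a closed subgroup containing `H`
and `M` is a compact `H`-invariant set, then `K • M` is closed. -/
lemma isClosed_smul_of_cocompact (H K : Subgroup T) (hHK : H ≤ K)
    (hKc : IsClosed (K : Set T)) [CompactSpace (T ⧸ H)]
    {M : Set Z} (hMc : IsCompact M) (hMinv : SubInv H M) :
    IsClosed ((K : Set T) • M) := by
  apply isClosed_of_closure_subset
  intro z hz
  set P : Set (T × Z) := (K : Set T) ×ˢ M with hPdef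
  set F : Filter (T × Z) := Filter.comap (fun p : T × Z => p.1 • p.2) (𝓝 z) ⊓ 𝓟 P with hF
  have hFne : F.NeBot := by
    rw [hF, Filter.inf_principal_neBot_iff]
    intro U hU
    rcases Filter.mem_comap.mp hU with ⟨V, hV, hVU⟩
    rcases mem_closure_iff_nhds.mp hz V hV with ⟨y, hyV, k, hkK, m, hmM, hkm⟩
    refine ⟨(k, m), hVU ?_, hkK, hmM⟩
    have hkm' : k • m = y := hkm
    show k • m ∈ V
    rw [hkm']; exact hyV
  haveI := hFne
  obtain ⟨q, hq⟩ := exists_clusterPt_of_compactSpace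
    (Filter.map (fun p : T × Z => (QuotientGroup.mk p.1 : T ⧸ H)) F)
  obtain ⟨t, rfl⟩ := QuotientGroup.mk_surjective q
  have key : ∀ B : Set T, IsOpen B → t ∈ B → ∀ S ∈ F, ∃ p : T × Z, p ∈ S ∧
      ∃ b ∈ B, (QuotientGroup.mk b : T ⧸ H) = QuotientGroup.mk p.1 := by
    intro B hB htB S hS
    have h1 : (QuotientGroup.mk '' B : Set (T ⧸ H)) ∈ 𝓝 (QuotientGroup.mk t : T ⧸ H) :=
      (QuotientGroup.isOpenMap_coe B hB).mem_nhds ⟨t, htB, rfl⟩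
    have h2 : (fun p : T × Z => (QuotientGroup.mk p.1 : T ⧸ H)) '' S ∈
        Filter.map (fun p : T × Z => (QuotientGroup.mk p.1 : T ⧸ H)) F :=
      Filter.image_mem_map hS
    obtain ⟨u, hu1, hu2⟩ := clusterPt_iff_nonempty.mp hq h1 h2
    rcases hu1 with ⟨b, hbB, hbu⟩
    rcases hu2 with ⟨p, hpS, hpu⟩
    exact ⟨p, hpS, b, hbB, hbu.trans hpu.symm⟩
  have htK : t ∈ (K : Set T) := by
    rw [← hKc.closure_eq, mem_closure_iff]
    intro B hB htB
    obtain ⟨p, hpP, b, hbB, hbe⟩ := key B hB htB P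
      (Filter.mem_inf_of_right (Filter.mem_principal_self P))
    have h3 : b⁻¹ * p.1 ∈ H := QuotientGroup.eq.mp hbe
    have h4 : b = p.1 * (b⁻¹ * p.1)⁻¹ := by group
    exact ⟨b, hbB, by rw [h4]; exact K.mul_mem hpP.1 (K.inv_mem (hHK h3))⟩
  have htzM : t⁻¹ • z ∈ M := by
    have hcls : t⁻¹ • z ∈ closure M := by
      rw [mem_closure_iff]
      intro V hV hVz
      have hcont : Continuous (fun p : T × Z => p.1⁻¹ • p.2) :=
        (continuous_fst.inv).smul continuous_snd
      have hpre : (fun p : T × Z => p.1⁻¹ • p.2) ⁻¹' V ∈ 𝓝 (t, z) :=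
        hcont.continuousAt.preimage_mem_nhds (hV.mem_nhds hVz)
      rw [mem_nhds_prod_iff] at hpre
      obtain ⟨B, hB, W, hW, hBW⟩ := hpre
      obtain ⟨B', hB'B, hB'o, htB'⟩ := mem_nhds_iff.mp hB
      have hSF : ((fun p : T × Z => p.1 • p.2) ⁻¹' W) ∩ P ∈ F :=
        Filter.inter_mem (Filter.mem_inf_of_left (Filter.preimage_mem_comap hW))
          (Filter.mem_inf_of_right (Filter.mem_principal_self P))
      obtain ⟨p, hpS, b, hbB', hbe⟩ := key B' hB'o htB' _ hSF
      have h3 : b⁻¹ * p.1 ∈ H := QuotientGroup.eq.mp hbe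
      have h5 : (b⁻¹ * p.1) • p.2 ∈ M := hMinv _ h3 _ hpS.2.2
      have h6 : p.1 • p.2 ∈ W := hpS.1
      have h7 : b⁻¹ • (p.1 • p.2) ∈ V := hBW (Set.mk_mem_prod (hB'B hbB') h6)
      rw [smul_smul] at h7
      exact ⟨_, h7, h5⟩
    rwa [hMc.isClosed.closure_eq] at hcls
  exact ⟨t, htK, t⁻¹ • z, htzM, smul_inv_smul t z⟩

lemma exists_reps (G K : Subgroup T) (hfi : (G.subgroupOf K).FiniteIndex) :
    ∃ Fs : Set T, Fs.Finite ∧ (∀ f ∈ Fs, f ∈ K) ∧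
      ∀ k ∈ K, ∃ f ∈ Fs, ∃ g ∈ G, k = f * g := by
  haveI := hfi
  refine ⟨Set.range (fun q : ↥K ⧸ G.subgroupOf K => ((Quotient.out q : ↥K) : T)),
    Set.finite_range _, ?_, ?_⟩
  · rintro _ ⟨q, rfl⟩; exact (Quotient.out q).2
  · intro k hk
    set kk : ↥K := ⟨k, hk⟩ with hkk
    set q : ↥K ⧸ G.subgroupOf K := QuotientGroup.mk kk with hq
    have hout : (QuotientGroup.mk (Quotient.out q) : ↥K ⧸ G.subgroupOf K) =
        QuotientGroup.mk kk := by
      rw [QuotientGroup.out_eq']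
    have hmem : (Quotient.out q)⁻¹ * kk ∈ G.subgroupOf K := QuotientGroup.eq.mp hout
    refine ⟨((Quotient.out q : ↥K) : T), ⟨q, rfl⟩,
      (((Quotient.out q)⁻¹ * kk : ↥K) : T), Subgroup.mem_subgroupOf.mp hmem, ?_⟩
    push_cast
    group
    rfl

/-- Inductive invariant: every `G`-orbit closure is a minimal set and is open. -/
def Good (G : Subgroup T) : Prop :=
  ∀ z : Z, IsMinSet G (closure (orbit G z)) ∧ IsOpen (closure (orbit G z))

lemma good_top [Nonempty Z] (hmin : ∀ z : Z, Dense (orbit T z)) :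
    Good (T := T) (Z := Z) (⊤ : Subgroup T) := by
  have horb : ∀ z : Z, orbit (⊤ : Subgroup T) z = orbit T z := by
    intro z; ext y
    rw [mem_orbit_sub, mem_orbit_iff]
    simp
  intro z
  have hcl : closure (orbit (⊤ : Subgroup T) z) = Set.univ := by
    rw [horb]; exact (hmin z).closure_eq
  rw [hcl]
  refine ⟨⟨Set.univ_nonempty, isClosed_univ, fun _ _ _ _ => trivial, ?_⟩, isOpen_univ⟩
  intro S hSsub hSne hScl hSinv
  obtain ⟨s, hs⟩ := hSne
  have h1 : orbit T s ⊆ S := by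
    intro y hy
    obtain ⟨g, rfl⟩ := mem_orbit_iff.mp hy
    exact hSinv g (Subgroup.mem_top g) s hs
  have h2 := closure_minimal h1 hScl
  rw [(hmin s).closure_eq] at h2
  exact Subset.antisymm hSsub h2

lemma good_step (G K : Subgroup T) (hGK : G ≤ K)
    (hconj : ∀ k ∈ K, ∀ g ∈ G, k * g * k⁻¹ ∈ G)
    (hfi : (G.subgroupOf K).FiniteIndex) (hK : Good (T := T) (Z := Z) K) :
    Good (T := T) (Z := Z) G := by
  classical
  obtain ⟨Fs, hFfin, hFK, hFrep⟩ := exists_reps G K hfi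
  have hconj' : ∀ k ∈ K, ∀ g ∈ G, k⁻¹ * g * k ∈ G := fun k hk g hg => by
    simpa using hconj k⁻¹ (K.inv_mem hk) g hg
  intro z
  obtain ⟨hKmin, hKopen⟩ := hK z
  set C := closure (orbit K z) with hCdef
  have hzC : z ∈ C := subset_closure (mem_orbit_self z)
  have hCinvG : SubInv G C := fun g hg => hKmin.2.2.1 g (hGK hg)
  obtain ⟨M, hMC, hM⟩ := exists_isMinSet G hKmin.2.1 ⟨z, hzC⟩ hCinvG
  have htrans : ∀ f ∈ K, IsMinSet G (f • M) := fun f hf =>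
    hM.smul_set (hconj f hf) (hconj' f hf)
  set Uu := ⋃ f ∈ Fs, f • M with hUdef
  have hUC : Uu ⊆ C := by
    intro y hy
    simp only [hUdef, Set.mem_iUnion, exists_prop] at hy
    obtain ⟨f, hf, m, hm, rfl⟩ := hy
    exact hKmin.2.2.1 f (hFK f hf) m (hMC hm)
  have hUcl : IsClosed Uu := hFfin.isClosed_biUnion fun f _ => hM.2.1.smul f
  have hUne : Uu.Nonempty := by
    obtain ⟨f, hf, g, hg, h1⟩ := hFrep 1 K.one_mem
    obtain ⟨m, hm⟩ := hM.1
    exact ⟨f • m, Set.mem_biUnion hf ⟨m, hm, rfl⟩⟩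
  have hUinv : SubInv K Uu := by
    intro k hk y hy
    simp only [hUdef, Set.mem_iUnion, exists_prop] at hy ⊢
    obtain ⟨f, hf, m, hm, rfl⟩ := hy
    obtain ⟨f', hf', g, hg, hdec⟩ := hFrep (k * f) (K.mul_mem hk (hFK f hf))
    refine ⟨f', hf', g • m, hM.2.2.1 g hg m hm, ?_⟩
    show f' • (g • m) = k • (f • m)
    rw [smul_smul, smul_smul, hdec]
  have hUeqC : Uu = C := hKmin.2.2.2 _ hUC hUne hUcl hUinv
  have hzU : z ∈ Uu := by rw [hUeqC]; exact hzC
  obtain ⟨f₀, hf₀, hzf₀⟩ : ∃ f ∈ Fs, z ∈ f • M := by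
    simpa only [hUdef, Set.mem_iUnion, exists_prop] using hzU
  have hMin0 : IsMinSet G (f₀ • M) := htrans f₀ (hFK f₀ hf₀)
  have hcleq : closure (orbit G z) = f₀ • M := hMin0.closure_orbit_eq hzf₀
  rw [hcleq]
  refine ⟨hMin0, ?_⟩
  set Fs₀ := {f ∈ Fs | ¬ f • M = f₀ • M} with hFs₀
  have hcl₀ : IsClosed (⋃ f ∈ Fs₀, f • M) :=
    (hFfin.subset (Set.sep_subset _ _)).isClosed_biUnion fun f _ => hM.2.1.smul f
  have key : f₀ • M = C ∩ (⋃ f ∈ Fs₀, f • M)ᶜ := by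
    apply Subset.antisymm
    · intro y hy
      refine ⟨hUC (Set.mem_biUnion hf₀ hy), ?_⟩
      intro hy'
      simp only [Set.mem_iUnion, exists_prop] at hy'
      obtain ⟨f, hfF₀, hyf⟩ := hy'
      exact hfF₀.2 ((htrans f (hFK f hfF₀.1)).eq_of_inter hMin0 ⟨y, hyf, hy⟩)
    · rintro y ⟨hyC, hyn⟩
      have hyU : y ∈ Uu := by rw [hUeqC]; exact hyC
      simp only [hUdef, Set.mem_iUnion, exists_prop] at hyU
      obtain ⟨f, hf, hyf⟩ := hyU
      by_cases hcase : f • M = f₀ • M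
      · rw [← hcase]; exact hyf
      · have hfF : f ∈ Fs₀ := ⟨hf, hcase⟩
        exact absurd (Set.mem_biUnion hfF hyf) hyn
  rw [key]
  exact hKopen.inter hcl₀.isOpen_compl

lemma hit_open (H : Subgroup T) {U : Set Z} (hU : IsOpen U) :
    IsOpen {x : Z | (closure (orbit H x) ∩ U).Nonempty} := by
  have heq : {x : Z | (closure (orbit H x) ∩ U).Nonempty}
      = ⋃ h ∈ (H : Set T), (fun x : Z => h • x) ⁻¹' U := by
    ext x
    simp only [Set.mem_setOf_eq, Set.mem_iUnion, Set.mem_preimage, SetLike.mem_coe, exists_prop]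
    constructor
    · rintro ⟨y, hy, hyU⟩
      obtain ⟨w, hwU, hworb⟩ := mem_closure_iff.mp hy U hU hyU
      obtain ⟨g, hg, rfl⟩ := mem_orbit_sub.mp hworb
      exact ⟨g, hg, hwU⟩
    · rintro ⟨h, hh, hU'⟩
      exact ⟨h • x, subset_closure (mem_orbit_sub.mpr ⟨h, hh, rfl⟩), hU'⟩
  rw [heq]
  exact isOpen_biUnion fun h _ => hU.preimage (continuous_const_smul h)

lemma miss_open (H G₁ : Subgroup T) (hHcl : IsClosed (H : Set T)) [CompactSpace (T ⧸ H)]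
    (hHG : H ≤ G₁) (hnor : ∀ g ∈ G₁, ∀ h ∈ H, g * h * g⁻¹ ∈ H)
    (hGood : Good (T := T) (Z := Z) G₁) {U : Set Z} (hU : IsOpen U) :
    IsOpen {x : Z | closure (orbit H x) ⊆ U} := by
  rw [isOpen_iff_forall_mem_open]
  intro x hx
  set K := G₁.topologicalClosure with hKdef
  have hKcl : IsClosed (K : Set T) := G₁.isClosed_topologicalClosure
  have hG₁K : G₁ ≤ K := G₁.le_topologicalClosure
  have hHK : H ≤ K := hHG.trans hG₁K
  have hKsub : (K : Set T) = closure (G₁ : Set T) := Subgroup.topologicalClosure_coe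
  have hnorK : ∀ k ∈ K, ∀ h ∈ H, k * h * k⁻¹ ∈ H := by
    have hcl : IsClosed {t : T | ∀ h ∈ (H : Set T), t * h * t⁻¹ ∈ (H : Set T)} := by
      have he : {t : T | ∀ h ∈ (H : Set T), t * h * t⁻¹ ∈ (H : Set T)}
          = ⋂ h ∈ (H : Set T), (fun t : T => t * h * t⁻¹) ⁻¹' (H : Set T) := by
        ext t; simp
      rw [he]
      exact isClosed_biInter fun h _ =>
        hHcl.preimage ((continuous_id.mul continuous_const).mul continuous_inv)
    intro k hk
    have hsub : (K : Set T) ⊆ {t : T | ∀ h ∈ (H : Set T), t * h * t⁻¹ ∈ (H : Set T)} := by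
      rw [hKsub]
      exact closure_minimal (fun g hg h hh => hnor g hg h hh) hcl
    exact fun h hh => hsub hk h hh
  have hnorK' : ∀ k ∈ K, ∀ h ∈ H, k⁻¹ * h * k ∈ H := fun k hk h hh => by
    simpa using hnorK k⁻¹ (K.inv_mem hk) h hh
  obtain ⟨hCmin, hCopen⟩ := hGood x
  set C := closure (orbit G₁ x) with hCdef
  have hxC : x ∈ C := subset_closure (mem_orbit_self x)
  have hCcl : IsClosed C := isClosed_closure
  have hCinvK : SubInv K C := by
    have hcl2 : IsClosed {t : T | ∀ y ∈ C, t • y ∈ C} := by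
      have he : {t : T | ∀ y ∈ C, t • y ∈ C} = ⋂ y ∈ C, (fun t : T => t • y) ⁻¹' C := by
        ext t; simp
      rw [he]
      exact isClosed_biInter fun y _ => hCcl.preimage (continuous_id.smul continuous_const)
    have hsub : (K : Set T) ⊆ {t : T | ∀ y ∈ C, t • y ∈ C} := by
      rw [hKsub]
      exact closure_minimal (fun g hg y hy => hCmin.2.2.1 g hg y hy) hcl2
    exact fun k hk y hy => hsub hk y hy
  have hCinvH : SubInv H C := fun h hh => hCinvK h (hHK hh)
  obtain ⟨M, hMC, hM⟩ := exists_isMinSet H hCcl ⟨x, hxC⟩ hCinvH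
  have hMcpt : IsCompact M := hM.2.1.isCompact
  have hKMC : (K : Set T) • M = C := by
    refine hCmin.2.2.2 _ ?_ ?_ ?_ ?_
    · rintro _ ⟨k, hk, m, hm, rfl⟩; exact hCinvK k hk m (hMC hm)
    · obtain ⟨m, hm⟩ := hM.1
      exact ⟨(1 : T) • m, 1, K.one_mem, m, hm, rfl⟩
    · exact isClosed_smul_of_cocompact H K hHK hKcl hMcpt hM.2.2.1
    · rintro g hg _ ⟨k, hk, m, hm, rfl⟩
      refine ⟨g * k, K.mul_mem (hG₁K hg) hk, m, hm, ?_⟩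
      show (g * k) • m = g • (k • m)
      rw [mul_smul]
  have hDcl : IsClosed ((K : Set T) • (M ×ˢ M)) :=
    isClosed_smul_of_cocompact (Z := Z × Z) H K hHK hKcl (hMcpt.prod hMcpt)
      (fun h hh p hp => Set.mem_prod.mpr
        ⟨hM.2.2.1 h hh _ (Set.mem_prod.mp hp).1, hM.2.2.1 h hh _ (Set.mem_prod.mp hp).2⟩)
  have hsec : ∀ x', x' ∈ C → {y : Z | (x', y) ∈ (K : Set T) • (M ×ˢ M)}
      = closure (orbit H x') := by
    intro x' hx'
    have hx'KM : x' ∈ (K : Set T) • M := by rw [hKMC]; exact hx'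
    obtain ⟨k, hk, m, hm, rfl⟩ := hx'KM
    have hkM : IsMinSet H (k • M) := hM.smul_set (hnorK k hk) (hnorK' k hk)
    have horb : closure (orbit H (k • m)) = k • M := hkM.closure_orbit_eq ⟨m, hm, rfl⟩
    rw [horb]
    ext y
    constructor
    · rintro ⟨k₁, hk₁, ⟨m₁, m₁'⟩, hm₁m, hps⟩
      obtain ⟨hm₁, hm₁'⟩ := Set.mem_prod.mp hm₁m
      have h1 : k₁ • m₁ = k • m := congrArg Prod.fst hps
      have h2 : k₁ • m₁' = y := congrArg Prod.snd hps
      have hk₁M : IsMinSet H (k₁ • M) := hM.smul_set (hnorK k₁ hk₁) (hnorK' k₁ hk₁)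
      have heq : k₁ • M = k • M := hk₁M.eq_of_inter hkM ⟨k • m, ⟨m₁, hm₁, h1⟩, ⟨m, hm, rfl⟩⟩
      rw [← heq]
      exact ⟨m₁', hm₁', h2⟩
    · rintro ⟨m', hm', rfl⟩
      exact ⟨k, hk, (m, m'), ⟨hm, hm'⟩, rfl⟩
  set D := (K : Set T) • (M ×ˢ M) with hDdef
  set Fst := Prod.fst '' (D ∩ (Set.univ ×ˢ Uᶜ)) with hFstdef
  have hFstcl : IsClosed Fst :=
    (((hDcl.inter (isClosed_univ.prod hU.isClosed_compl)).isCompact).image continuous_fst).isClosed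
  refine ⟨C ∩ Fstᶜ, ?_, hCopen.inter hFstcl.isOpen_compl, hxC, ?_⟩
  · rintro x' ⟨hx'C, hx'F⟩
    intro y hy
    rw [← hsec x' hx'C] at hy
    by_contra hyU
    exact hx'F ⟨(x', y), ⟨hy, trivial, hyU⟩, rfl⟩
  · rintro ⟨⟨x₁, y⟩, ⟨hD', -, hyU⟩, h1⟩
    apply hyU
    apply hx
    rw [← hsec x hxC]
    have h1' : x₁ = x := h1
    rw [← h1']
    exact hD'

end OCAux

open OCAux in
/-- Let `T` act continuously and minimally on a compact Hausdorff space `X`, and let `H`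
be a closed subgroup admitting a subnormal chain `H = c 0 ◁ c 1 ◁ ⋯ ◁ c n = T` in which
`H` is co-compact in `T` and the index `[c (i+1) : c i]` is finite for all `1 ≤ i < n`.
Then the orbit-closure map `x ↦ cl(H·x)` is Vietoris-continuous. -/
theorem orbitClosure_continuous_of_subnormal_finiteIndex_chain
    {T X : Type*} [Group T] [TopologicalSpace T] [IsTopologicalGroup T] [T2Space T]
    [TopologicalSpace X] [CompactSpace X] [T2Space X] [MulAction T X] [ContinuousSMul T X]
    (hmin : ∀ x : X, Dense (orbit T x))
    (H : Subgroup T) (hHclosed : IsClosed (H : Set T)) (hcc : CompactSpace (T ⧸ H))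
    (n : ℕ) (c : Fin (n + 1) → Subgroup T)
    (hc0 : c 0 = H) (hclast : c (Fin.last n) = ⊤)
    (hle : ∀ i : Fin n, c i.castSucc ≤ c i.succ)
    (hnorm : ∀ i : Fin n, ((c i.castSucc).subgroupOf (c i.succ)).Normal)
    (hfin : ∀ i : Fin n, 1 ≤ (i : ℕ) → ((c i.castSucc).subgroupOf (c i.succ)).FiniteIndex) :
    @Continuous X {A : Set X // A.Nonempty ∧ IsClosed A} _ (VietorisTopology X)
      (fun x => ⟨closure (orbit H x),
        ⟨x, subset_closure (mem_orbit_self x)⟩, isClosed_closure⟩) := by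
  classical
  haveI := hcc
  rcases isEmpty_or_nonempty X with hX | hX
  · unfold VietorisTopology
    rw [continuous_generateFrom_iff]
    intro s _
    have he : (fun x : X => (⟨closure (orbit H x),
        ⟨x, subset_closure (mem_orbit_self x)⟩, isClosed_closure⟩ :
          {A : Set X // A.Nonempty ∧ IsClosed A})) ⁻¹' s = ∅ :=
      Set.eq_empty_of_isEmpty _
    rw [he]
    exact isOpen_empty
  · have hconjStep : ∀ i : Fin n, ∀ k ∈ c i.succ, ∀ g ∈ c i.castSucc,
        k * g * k⁻¹ ∈ c i.castSucc := by
      intro i k hk g hg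
      have h1 : (⟨g, hle i hg⟩ : ↥(c i.succ)) ∈ (c i.castSucc).subgroupOf (c i.succ) :=
        Subgroup.mem_subgroupOf.mpr hg
      have h2 := (hnorm i).conj_mem _ h1 ⟨k, hk⟩
      have h3 := Subgroup.mem_subgroupOf.mp h2
      simpa using h3
    obtain ⟨G₁, hHG₁, hnor, hGood⟩ :
        ∃ G₁ : Subgroup T, H ≤ G₁ ∧ (∀ g ∈ G₁, ∀ h ∈ H, g * h * g⁻¹ ∈ H) ∧
          Good (T := T) (Z := X) G₁ := by
      rcases Nat.eq_zero_or_pos n with hn | hn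
      · subst hn
        have hHT : H = ⊤ := by rw [← hc0]; exact hclast
        exact ⟨⊤, le_top, fun g _ h _ => by rw [hHT]; exact Subgroup.mem_top _,
          good_top hmin⟩
      · have hstep : ∀ m : ℕ, m ≤ n - 1 → Good (T := T) (Z := X) (c ⟨n - m, by omega⟩) := by
          intro m
          induction m with
          | zero =>
            intro _
            have e : (⟨n - 0, by omega⟩ : Fin (n+1)) = Fin.last n := by
              apply Fin.ext; simp [Fin.last]
            rw [e, hclast]
            exact good_top hmin
          | succ m ih =>
            intro hm
            have hGm := ih (by omega)
            have hnm : n - (m+1) < n := by omega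
            have hsucc : (⟨n - (m+1), hnm⟩ : Fin n).succ = ⟨n - m, by omega⟩ := by
              apply Fin.ext; simp [Fin.val_succ]; omega
            have hcast : (⟨n - (m+1), hnm⟩ : Fin n).castSucc = ⟨n - (m+1), by omega⟩ := by
              apply Fin.ext; simp
            have hGi : Good (T := T) (Z := X) (c (⟨n - (m+1), hnm⟩ : Fin n).succ) := by
              rw [hsucc]; exact hGm
            have hres := good_step (c (⟨n - (m+1), hnm⟩ : Fin n).castSucc)
              (c (⟨n - (m+1), hnm⟩ : Fin n).succ) (hle _) (hconjStep _)
              (hfin _ (by simp; omega)) hGi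
            rw [hcast] at hres
            exact hres
        have hG1 : Good (T := T) (Z := X) (c ⟨1, by omega⟩) := by
          have h := hstep (n - 1) le_rfl
          have e : (⟨n - (n-1), by omega⟩ : Fin (n+1)) = ⟨1, by omega⟩ := by
            apply Fin.ext; simp; omega
          rwa [e] at h
        have hc0' : c (⟨0, hn⟩ : Fin n).castSucc = H := by
          have e : (⟨0, hn⟩ : Fin n).castSucc = (0 : Fin (n+1)) := by
            apply Fin.ext; simp
          rw [e, hc0]
        have hsucc0 : (⟨0, hn⟩ : Fin n).succ = ⟨1, by omega⟩ := by
          apply Fin.ext; simp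
        refine ⟨c ⟨1, by omega⟩, ?_, ?_, hG1⟩
        · have h := hle (⟨0, hn⟩ : Fin n)
          rwa [hc0', hsucc0] at h
        · intro g hg h hh
          rw [← hsucc0] at hg
          have h1 := hconjStep (⟨0, hn⟩ : Fin n) g hg h (by rw [hc0']; exact hh)
          rwa [hc0'] at h1
    unfold VietorisTopology
    rw [continuous_generateFrom_iff]
    rintro s (⟨U, hU, rfl⟩ | ⟨U, hU, rfl⟩)
    · exact miss_open H G₁ hHclosed hHG₁ hnor hGood hU
    · exact hit_open H hU
end

section
/- Let T be a Hausdorff topological group acting continuously on compact Hausdorff spaces X and Z, let φ : X → Z be a continuous T-equivariant map, and let H be a co-compact closed subgroup of T. Then for any x₁, x₂ ∈ X with φ(x₁) = φ(x₂): the closure of {(t·x₁, t·x₂) : t ∈ T} in X × X meets the diagonal if and only if the closure of {(h·x₁, h·x₂) : h ∈ H} meets the diagonal. That is, P_φ for the T-action equals P_φ for the H-action. -/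
open MulAction Pointwise

/-- Inheritance of relativized proximality: for `φ : X → Z` a homomorphism of `T`-flows and
`H` a co-compact closed subgroup of `T`, a pair `(x₁, x₂)` with `φ x₁ = φ x₂` is proximal
for the `T`-action iff it is proximal for the restricted `H`-action. -/
theorem relativeProximal_iff_cocompact_subgroup
    {T X Z : Type*} [Group T] [TopologicalSpace T] [IsTopologicalGroup T] [T2Space T]
    [TopologicalSpace X] [CompactSpace X] [T2Space X] [MulAction T X] [ContinuousSMul T X]
    [TopologicalSpace Z] [CompactSpace Z] [T2Space Z] [MulAction T Z] [ContinuousSMul T Z]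
    (φ : X → Z) (hφc : Continuous φ) (hφe : ∀ (t : T) (x : X), φ (t • x) = t • φ x)
    (H : Subgroup T) (hHclosed : IsClosed (H : Set T)) (hcc : CompactSpace (T ⧸ H))
    (x₁ x₂ : X) (hφeq : φ x₁ = φ x₂) :
    (closure (Set.range fun t : T => (t • x₁, t • x₂)) ∩ Set.diagonal X).Nonempty ↔
      (closure (Set.range fun s : H => (s • x₁, s • x₂)) ∩ Set.diagonal X).Nonempty := by
  constructor
  · -- the hard direction
    rintro ⟨w, hwC, hwd⟩
    set p : X × X := (x₁, x₂) with hp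
    have hrw : (fun t : T => (t • x₁, t • x₂)) = fun t : T => t • p := rfl
    -- the auxiliary space and orbit closure
    set f : T → (X × X) × (T ⧸ H) := fun t => (t • p, QuotientGroup.mk t) with hf
    set Q : Set ((X × X) × (T ⧸ H)) := closure (Set.range f) with hQ
    have hQc : IsCompact Q := isClosed_closure.isCompact
    -- w is in the image of Q under the first projection
    have hproj : closure (Set.range fun t : T => t • p) ⊆ Prod.fst '' Q := by
      apply closure_minimal
      · rintro _ ⟨t, rfl⟩
        exact ⟨f t, subset_closure ⟨t, rfl⟩, rfl⟩
      · exact (hQc.image continuous_fst).isClosed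
    rw [hrw] at hwC
    obtain ⟨⟨w', η⟩, hwQ, hw'⟩ := hproj hwC
    simp only at hw'
    subst hw'
    obtain ⟨k, rfl⟩ := QuotientGroup.mk_surjective η
    -- Q is invariant under the diagonal T-action
    have hinv : ∀ g : T, g • Q ⊆ Q := by
      intro g
      rw [hQ, ← closure_smul]
      apply closure_mono
      rintro _ ⟨_, ⟨t, rfl⟩, rfl⟩
      refine ⟨g * t, ?_⟩
      simp only [hf, Prod.smul_mk, smul_smul, Prod.mk.injEq,
        MulAction.Quotient.smul_mk, smul_eq_mul, and_true, true_and]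
    have hzQ : (k⁻¹ • w', QuotientGroup.mk (1 : T)) ∈ Q := by
      have : k⁻¹ • ((w', QuotientGroup.mk k) : (X × X) × (T ⧸ H)) ∈ Q :=
        hinv k⁻¹ ⟨_, hwQ, rfl⟩
      simpa [Prod.smul_mk, MulAction.Quotient.smul_mk] using this
    set z : X × X := k⁻¹ • w' with hz
    have hzd : z ∈ Set.diagonal X := by
      have : w'.1 = w'.2 := hwd
      simp [hz, Prod.smul_def, Set.diagonal, this]
    -- z is in the closure of the H-orbit of p
    refine ⟨z, ?_, hzd⟩
    rw [mem_closure_iff_nhds]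
    intro U hU
    -- continuity of (g, w) ↦ g⁻¹ • w at (1, z)
    have hc : Continuous fun q : T × (X × X) => q.1⁻¹ • q.2 :=
      (continuous_inv.comp continuous_fst).smul continuous_snd
    have h1 : ∀ᶠ q : T × (X × X) in nhds (1, z), q.1⁻¹ • q.2 ∈ U := by
      have := hc.continuousAt (x := ((1 : T), z))
      apply this
      simpa using hU
    rw [nhds_prod_eq, Filter.eventually_prod_iff] at h1
    obtain ⟨pa, hpa, pb, hpb, hab⟩ := h1
    -- a neighborhood of ((z, 1H)) in the auxiliary space
    have hVa : {t : T | pa t} ∈ nhds (1 : T) := hpa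
    have hVb : {x : X × X | pb x} ∈ nhds z := hpb
    have hWn : ({x : X × X | pb x} ×ˢ (QuotientGroup.mk '' {t : T | pa t}) :
        Set ((X × X) × (T ⧸ H))) ∈ nhds ((z, QuotientGroup.mk (1 : T))) := by
      rw [nhds_prod_eq]
      exact Filter.prod_mem_prod hVb ((QuotientGroup.isOpenMap_coe).image_mem_nhds hVa)
    have := mem_closure_iff_nhds.mp hzQ _ hWn
    obtain ⟨⟨a, b⟩, ⟨hb1, hb2⟩, t, hft⟩ := this
    obtain ⟨v, hv, hvb⟩ := hb2
    -- v⁻¹ * t ∈ H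
    have hmem : v⁻¹ * t ∈ H := by
      rw [← QuotientGroup.eq]
      have : (QuotientGroup.mk t : T ⧸ H) = QuotientGroup.mk v := by
        have hsnd := congrArg Prod.snd hft
        simpa [hf] using hsnd.trans hvb.symm
      exact this.symm
    have hfst : t • p = a := congrArg Prod.fst hft
    refine ⟨(⟨v⁻¹ * t, hmem⟩ : H) • p, ?_, ⟨⟨v⁻¹ * t, hmem⟩, rfl⟩⟩
    have : (⟨v⁻¹ * t, hmem⟩ : H) • p = v⁻¹ • (t • p) := by
      rw [smul_smul]; rfl
    rw [this, hfst]
    exact hab hv hb1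
  · -- easy direction: H-orbit ⊆ T-orbit
    rintro ⟨w, hwC, hwd⟩
    refine ⟨w, ?_, hwd⟩
    refine closure_mono ?_ hwC
    rintro _ ⟨s, rfl⟩
    exact ⟨(s : T), rfl⟩
end

section
/- Let T be a Hausdorff topological group acting continuously on compact Hausdorff spaces X and Z, let φ : X → Z be a continuous T-equivariant map, and let H be a co-compact closed subgroup of T. Then the T-action on X is φ-distal if and only if the H-action on X is φ-distal; that is, P_φ for the T-action equals the diagonal Δ_X if and only if P_φ for the H-action equals Δ_X. -/
open MulAction

/-- Key lemma: if `(w, 1)` is in the closure of `{(t • p, ↑t) : t ∈ T}` inside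
`Y × (T ⧸ H)`, then `w` is in the closure of the `H`-orbit of `p`. -/
lemma relativeDistal_key_aux {T Y : Type*} [Group T] [TopologicalSpace T] [IsTopologicalGroup T]
    [TopologicalSpace Y] [CompactSpace Y] [T2Space Y] [MulAction T Y] [ContinuousSMul T Y]
    (H : Subgroup T) (p w : Y)
    (hw : ((w, ((1 : T) : T ⧸ H)) : Y × (T ⧸ H)) ∈
      closure (Set.range fun t : T => (t • p, ((t : T ⧸ H))))) :
    w ∈ closure (Set.range fun h : H => (h : T) • p) := by
  by_contra hw'
  set C := closure (Set.range fun h : H => (h : T) • p) with hC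
  have hCcomp : IsCompact C := isClosed_closure.isCompact
  obtain ⟨U, V, hUo, hVo, hCU, hwV, hUV⟩ :=
    SeparatedNhds.of_isCompact_isCompact hCcomp isCompact_singleton
      (by simpa [Set.disjoint_singleton_right] using hw')
  have hwV' : w ∈ V := hwV rfl
  -- tube lemma: find a neighborhood N of 1 with N • C ⊆ U
  have hno : IsOpen ((fun q : T × Y => q.1 • q.2) ⁻¹' U) := hUo.preimage continuous_smul
  have hsub : ({(1 : T)} ×ˢ C) ⊆ ((fun q : T × Y => q.1 • q.2) ⁻¹' U) := by
    rintro ⟨a, c⟩ ⟨ha, hc⟩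
    simp only [Set.mem_singleton_iff] at ha
    subst ha
    simpa using hCU hc
  obtain ⟨N, O, hNo, hOo, hN1, hCO, hNO⟩ :=
    generalized_tube_lemma isCompact_singleton hCcomp hno hsub
  have hWo : IsOpen (QuotientGroup.mk '' N : Set (T ⧸ H)) := QuotientGroup.isOpenMap_coe N hNo
  -- the open set `V ×ˢ (mk '' N)` contains `(w, 1)`, hence meets the range
  have hmem : ((w, ((1 : T) : T ⧸ H)) : Y × (T ⧸ H)) ∈ V ×ˢ (QuotientGroup.mk '' N) := by
    refine ⟨hwV', ⟨1, hN1 rfl, rfl⟩⟩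
  obtain ⟨q, hq1, hq2⟩ :=
    mem_closure_iff.mp hw (V ×ˢ (QuotientGroup.mk '' N)) (hVo.prod hWo) hmem
  obtain ⟨t, rfl⟩ := hq2
  obtain ⟨htV, n, hnN, hn⟩ := hq1
  have hnt : n⁻¹ * t ∈ H := QuotientGroup.eq.mp hn
  have hmemC : ((n⁻¹ * t) • p : Y) ∈ C :=
    subset_closure ⟨⟨n⁻¹ * t, hnt⟩, rfl⟩
  have htU : (t • p : Y) ∈ U := by
    have : ((n, (n⁻¹ * t) • p) : T × Y) ∈ N ×ˢ O := ⟨hnN, hCO hmemC⟩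
    have := hNO this
    simpa [smul_smul, mul_inv_cancel_left] using this
  exact (Set.disjoint_left.mp hUV htU) htV

/-- Inheritance of relativized distality: for `φ : X → Z` a homomorphism of `T`-flows and
`H` a co-compact closed subgroup of `T`, the `T`-action on `X` is `φ`-distal iff the
restricted `H`-action is `φ`-distal, i.e. `P_φ(T) = Δ_X ↔ P_φ(H) = Δ_X`. -/
theorem relativeDistal_iff_cocompact_subgroup
    {T X Z : Type*} [Group T] [TopologicalSpace T] [IsTopologicalGroup T] [T2Space T]
    [TopologicalSpace X] [CompactSpace X] [T2Space X] [MulAction T X] [ContinuousSMul T X]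
    [TopologicalSpace Z] [CompactSpace Z] [T2Space Z] [MulAction T Z] [ContinuousSMul T Z]
    (φ : X → Z) (hφc : Continuous φ) (hφe : ∀ (t : T) (x : X), φ (t • x) = t • φ x)
    (H : Subgroup T) (hHclosed : IsClosed (H : Set T)) (hcc : CompactSpace (T ⧸ H)) :
    ({p : X × X | φ p.1 = φ p.2 ∧
        (closure (Set.range fun t : T => (t • p.1, t • p.2)) ∩ Set.diagonal X).Nonempty} =
      Set.diagonal X) ↔
    ({p : X × X | φ p.1 = φ p.2 ∧
        (closure (Set.range fun s : H => (s • p.1, s • p.2)) ∩ Set.diagonal X).Nonempty} =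
      Set.diagonal X) := by
  haveI := hcc
  -- the diagonal is always contained in both relations
  have hΔT : Set.diagonal X ⊆
      {p : X × X | φ p.1 = φ p.2 ∧
        (closure (Set.range fun t : T => (t • p.1, t • p.2)) ∩ Set.diagonal X).Nonempty} := by
    intro p hp
    refine ⟨by rw [hp], ⟨p, subset_closure ⟨(1 : T), by simp⟩, hp⟩⟩
  have hΔH : Set.diagonal X ⊆
      {p : X × X | φ p.1 = φ p.2 ∧
        (closure (Set.range fun s : H => (s • p.1, s • p.2)) ∩ Set.diagonal X).Nonempty} := by
    intro p hp
    refine ⟨by rw [hp], ⟨p, subset_closure ⟨(1 : H), by simp⟩, hp⟩⟩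
  constructor
  · -- easy direction: H-orbits are contained in T-orbits
    intro hT
    refine Set.Subset.antisymm (fun p hp => ?_) hΔH
    obtain ⟨hφp, z, hz1, hz2⟩ := hp
    have : p ∈ Set.diagonal X := by
      rw [← hT]
      refine ⟨hφp, ⟨z, ?_, hz2⟩⟩
      refine closure_mono ?_ hz1
      rintro _ ⟨s, rfl⟩
      exact ⟨(s : T), rfl⟩
    exact this
  · -- hard direction, uses co-compactness
    intro hH
    refine Set.Subset.antisymm (fun p hp => ?_) hΔT
    obtain ⟨hφp, z, hz1, hz2⟩ := hp
    -- work in the compact space (X × X) × (T ⧸ H)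
    set f : T → (X × X) × (T ⧸ H) := fun t => (t • p, ((t : T ⧸ H))) with hf
    set M := closure (Set.range f) with hM
    have hMcomp : IsCompact M := isClosed_closure.isCompact
    have hKclosed : IsClosed (Prod.fst '' M) := (hMcomp.image continuous_fst).isClosed
    have hzK : z ∈ Prod.fst '' M := by
      have hsub : Set.range (fun t : T => (t • p.1, t • p.2)) ⊆ Prod.fst '' M := by
        rintro _ ⟨t, rfl⟩
        exact ⟨f t, subset_closure ⟨t, rfl⟩, rfl⟩
      exact closure_minimal hsub hKclosed hz1
    obtain ⟨m, hmM, hm1⟩ := hzK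
    obtain ⟨t, ht⟩ : ∃ t : T, ((t : T ⧸ H)) = m.2 := QuotientGroup.mk_surjective m.2
    -- translate by t⁻¹ to land in the fiber over 1
    have hMinv : (fun q : (X × X) × (T ⧸ H) => t⁻¹ • q) '' M ⊆ M := by
      have h1 : (fun q : (X × X) × (T ⧸ H) => t⁻¹ • q) '' M ⊆
          closure ((fun q : (X × X) × (T ⧸ H) => t⁻¹ • q) '' Set.range f) :=
        image_closure_subset_closure_image (continuous_const_smul _)
      refine h1.trans (closure_mono ?_)
      rintro _ ⟨_, ⟨s, rfl⟩, rfl⟩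
      refine ⟨t⁻¹ * s, ?_⟩
      simp only [hf]
      ext <;> simp [smul_smul]
    have hkey : ((t⁻¹ • z, ((1 : T) : T ⧸ H)) : (X × X) × (T ⧸ H)) ∈ M := by
      have : t⁻¹ • m ∈ M := hMinv ⟨m, hmM, rfl⟩
      have hm : t⁻¹ • m = (t⁻¹ • z, ((1 : T) : T ⧸ H)) := by
        have : t⁻¹ • m.2 = ((1 : T) : T ⧸ H) := by
          rw [← ht]
          show (((t⁻¹ * t : T)) : T ⧸ H) = _
          simp
        ext
        · rw [← hm1]; rfl
        · rw [← hm1]; rfl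
        · exact this
      rwa [hm] at this
    have hcl : t⁻¹ • z ∈ closure (Set.range fun h : H => (h : T) • p) :=
      relativeDistal_key_aux H p (t⁻¹ • z) hkey
    -- now apply φ-distality of the H-action
    have hpH : p ∈ ({q : X × X | φ q.1 = φ q.2 ∧
        (closure (Set.range fun s : H => (s • q.1, s • q.2)) ∩ Set.diagonal X).Nonempty}) := by
      refine ⟨hφp, ⟨t⁻¹ • z, ?_, ?_⟩⟩
      · convert hcl using 3
        rfl
      · show (t⁻¹ • z).1 = (t⁻¹ • z).2
        show t⁻¹ • z.1 = t⁻¹ • z.2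
        rw [hz2]
    rw [hH] at hpH
    exact hpH
end

section
/- Let T be a Hausdorff topological group acting continuously on a compact Hausdorff space X, and let H be a co-compact closed subgroup of T. Consider the diagonal action of T on X × T/H given by t·(x, sH) = (t·x, tsH). This action on X × T/H is minimal if and only if both the T-action on X is minimal and the restricted H-action on X is minimal. -/
open MulAction

/-- The closure of an orbit is invariant under the action. -/
lemma smul_mem_closure_orbit {T Y : Type*} [Group T] [TopologicalSpace T]
    [TopologicalSpace Y] [MulAction T Y] [ContinuousSMul T Y]
    (t : T) {p y : Y} (hy : y ∈ closure (orbit T p)) :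
    t • y ∈ closure (orbit T p) := by
  have h1 : (t • ·) '' closure (orbit T p) ⊆ closure ((t • ·) '' orbit T p) :=
    image_closure_subset_closure_image (continuous_const_smul t)
  have h2 : (t • ·) '' orbit T p ⊆ orbit T p := by
    rintro _ ⟨z, ⟨s, rfl⟩, rfl⟩
    exact ⟨t * s, by simp [mul_smul]⟩
  exact closure_mono h2 (h1 ⟨y, hy, rfl⟩)

/-- For `H` a co-compact closed subgroup of `T`, the diagonal `T`-action on `X × T/H`
(with `t • (x, sH) = (t • x, (t*s)H)`) is minimal iff the `T`-action on `X` is minimal and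
the restricted `H`-action on `X` is minimal. -/
theorem prod_quotient_minimal_iff
    {T X : Type*} [Group T] [TopologicalSpace T] [IsTopologicalGroup T] [T2Space T]
    [TopologicalSpace X] [CompactSpace X] [T2Space X] [MulAction T X] [ContinuousSMul T X]
    (H : Subgroup T) (hHclosed : IsClosed (H : Set T)) (hcc : CompactSpace (T ⧸ H)) :
    (∀ p : X × (T ⧸ H), Dense (orbit T p)) ↔
      (∀ x : X, Dense (orbit T x)) ∧ (∀ x : X, Dense (orbit H x)) := by
  constructor
  · intro hmin
    have key : ∀ x y : X, y ∈ closure (orbit H x) := by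
      intro x y
      set C := closure (orbit H x) with hC
      -- C is invariant under elements of H
      have hCinv : ∀ h ∈ H, ∀ z ∈ C, h • z ∈ C := by
        intro h hh z hz
        have h1 : ((⟨h, hh⟩ : H) • ·) '' C ⊆ closure (((⟨h, hh⟩ : H) • ·) '' orbit H x) :=
          image_closure_subset_closure_image (continuous_const_smul _)
        have h2 : ((⟨h, hh⟩ : H) • ·) '' orbit H x ⊆ orbit H x := by
          rintro _ ⟨w, ⟨s, rfl⟩, rfl⟩
          exact ⟨⟨h, hh⟩ * s, by simp [mul_smul]⟩
        exact closure_mono h2 (h1 ⟨z, hz, rfl⟩)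
      -- the "saturated" closed set N
      set N : Set (X × (T ⧸ H)) :=
        {p | ∀ t : T, QuotientGroup.mk t = p.2 → t⁻¹ • p.1 ∈ C} with hN
      have hpre : Prod.map id (QuotientGroup.mk : T → T ⧸ H) ⁻¹' N
          = {q : X × T | q.2⁻¹ • q.1 ∈ C} := by
        ext ⟨z, t⟩
        constructor
        · intro hq
          exact hq t rfl
        · intro hq t' ht'
          have hmem : t'⁻¹ * t ∈ H := QuotientGroup.eq.mp ht'
          show t'⁻¹ • z ∈ C
          have : t'⁻¹ • z = (t'⁻¹ * t) • t⁻¹ • z := by rw [smul_smul]; group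
          rw [this]
          exact hCinv _ hmem _ hq
      have hNclosed : IsClosed N := by
        rw [← (IsOpenQuotientMap.id.prodMap QuotientGroup.isOpenQuotientMap_mk
          ).isQuotientMap.isClosed_preimage, hpre]
        exact IsClosed.preimage (by fun_prop) isClosed_closure
      have horbN : orbit T (x, (QuotientGroup.mk (1 : T) : T ⧸ H)) ⊆ N := by
        rintro p ⟨t, rfl⟩
        have hp : (fun m : T => m • (x, (QuotientGroup.mk (1:T) : T ⧸ H))) t
            = (t • x, (QuotientGroup.mk t : T ⧸ H)) := by
          refine Prod.ext rfl ?_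
          show t • (QuotientGroup.mk (1:T) : T ⧸ H) = QuotientGroup.mk t
          rw [MulAction.Quotient.smul_mk, smul_eq_mul, mul_one]
        rw [hp]
        intro t' ht'
        have hmem : t'⁻¹ * t ∈ H := QuotientGroup.eq.mp ht'
        show t'⁻¹ • (t • x) ∈ C
        have : t'⁻¹ • (t • x) = (⟨t'⁻¹ * t, hmem⟩ : H) • x := by
          show t'⁻¹ • t • x = (t'⁻¹ * t) • x
          rw [mul_smul]
        rw [this]
        exact subset_closure ⟨_, rfl⟩
      have hyN : (y, (QuotientGroup.mk (1 : T) : T ⧸ H)) ∈ N := by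
        have hcl : closure (orbit T (x, (QuotientGroup.mk (1 : T) : T ⧸ H))) ⊆ N :=
          closure_minimal horbN hNclosed
        exact hcl (hmin _ _)
      simpa using hyN (1 : T) rfl
    refine ⟨fun x y => ?_, fun x y => key x y⟩
    · -- T-minimality on X from projection
      have h1 := hmin (x, QuotientGroup.mk (1 : T)) (y, QuotientGroup.mk (1 : T))
      have h2 : Prod.fst '' closure (orbit T (x, (QuotientGroup.mk (1:T) : T ⧸ H)))
          ⊆ closure (Prod.fst '' orbit T (x, (QuotientGroup.mk (1:T) : T ⧸ H))) :=
        image_closure_subset_closure_image continuous_fst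
      have h3 : Prod.fst '' orbit T (x, (QuotientGroup.mk (1:T) : T ⧸ H)) ⊆ orbit T x := by
        rintro _ ⟨q, ⟨s, rfl⟩, rfl⟩
        exact ⟨s, rfl⟩
      exact closure_mono h3 (h2 ⟨_, h1, rfl⟩)
  · rintro ⟨-, hH⟩
    intro p
    obtain ⟨x, q⟩ := p
    obtain ⟨s, rfl⟩ := QuotientGroup.mk_surjective q
    -- reduce to base point at the identity coset
    have horb : orbit T (x, (QuotientGroup.mk s : T ⧸ H))
        = orbit T (s⁻¹ • x, (QuotientGroup.mk (1 : T) : T ⧸ H)) := by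
      have : (s⁻¹ • x, (QuotientGroup.mk (1 : T) : T ⧸ H))
          = s⁻¹ • (x, (QuotientGroup.mk s : T ⧸ H)) := by
        refine Prod.ext rfl ?_
        show QuotientGroup.mk (1 : T) = s⁻¹ • (QuotientGroup.mk s : T ⧸ H)
        rw [MulAction.Quotient.smul_mk, smul_eq_mul]
        group
      rw [this, orbit_smul]
    rw [horb]
    set x' := s⁻¹ • x
    intro ⟨y, w⟩
    obtain ⟨t, rfl⟩ := QuotientGroup.mk_surjective w
    -- (y, tH) = t • (t⁻¹ • y, 1H), so reduce to points over the identity coset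
    have hident : ∀ z : X, (z, (QuotientGroup.mk (1 : T) : T ⧸ H))
        ∈ closure (orbit T (x', (QuotientGroup.mk (1 : T) : T ⧸ H))) := by
      intro z
      have hz : z ∈ closure (orbit H x') := hH x' z
      have h1 : (fun w : X => (w, (QuotientGroup.mk (1 : T) : T ⧸ H))) '' closure (orbit H x')
          ⊆ closure ((fun w : X => (w, (QuotientGroup.mk (1 : T) : T ⧸ H))) '' orbit H x') :=
        image_closure_subset_closure_image (by fun_prop)
      have h2 : (fun w : X => (w, (QuotientGroup.mk (1 : T) : T ⧸ H))) '' orbit H x'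
          ⊆ orbit T (x', (QuotientGroup.mk (1 : T) : T ⧸ H)) := by
        rintro _ ⟨w, ⟨h, rfl⟩, rfl⟩
        refine ⟨(h : T), Prod.ext rfl ?_⟩
        show (h : T) • (QuotientGroup.mk (1:T) : T ⧸ H) = QuotientGroup.mk (1 : T)
        rw [MulAction.Quotient.smul_mk]
        exact QuotientGroup.eq.mpr (by simp [h.2])
      exact closure_mono h2 (h1 ⟨z, hz, rfl⟩)
    have := smul_mem_closure_orbit t (hident (t⁻¹ • y))
    have heq : t • ((t⁻¹ • y, (QuotientGroup.mk (1 : T) : T ⧸ H)))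
        = (y, (QuotientGroup.mk t : T ⧸ H)) := by
      refine Prod.ext ?_ ?_
      · show t • t⁻¹ • y = y; simp
      · show t • (QuotientGroup.mk (1:T) : T ⧸ H) = QuotientGroup.mk t
        rw [MulAction.Quotient.smul_mk, smul_eq_mul, mul_one]
    rwa [heq] at this
end

section
/- Let T be a Hausdorff topological group and let S be a closed subsemigroup of T (nonempty, closed, and closed under multiplication) such that for every neighborhood V of the identity e there exists a finite set F ⊆ T with F·V·S = T. Then S is a subgroup of T (i.e., S contains e and is closed under inversion). -/
open Pointwise

/-- If `S` is a closed subsemigroup of a Hausdorff topological group `T` such that for every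
neighborhood `V` of the identity there is a finite set `F` with `F·V·S = T`, then `S` is a
subgroup of `T` (it contains the identity and is closed under inversion). -/
theorem subgroup_of_closed_subsemigroup
    {T : Type*} [Group T] [TopologicalSpace T] [IsTopologicalGroup T] [T2Space T]
    (S : Set T) (hne : S.Nonempty) (hclosed : IsClosed S)
    (hmul : ∀ a ∈ S, ∀ b ∈ S, a * b ∈ S)
    (hfill : ∀ V ∈ nhds (1 : T), ∃ F : Set T, F.Finite ∧ F * V * S = Set.univ) :
    (1 : T) ∈ S ∧ ∀ s ∈ S, s⁻¹ ∈ S := by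
  have hinv : ∀ s ∈ S, s⁻¹ ∈ S := by
    intro s hs
    -- Main claim: every neighborhood of `1` contains `z * s` for some `z ∈ S`.
    have hA : ∀ W ∈ nhds (1 : T), ∃ z ∈ S, z * s ∈ W := by
      intro W hW
      obtain ⟨V₁, hV₁, hV₁W⟩ := exists_nhds_one_split hW
      have hV₁' : (fun x : T => x⁻¹) ⁻¹' V₁ ∈ nhds (1 : T) := by
        have hcont : ContinuousAt (fun x : T => x⁻¹) (1 : T) := continuous_inv.continuousAt
        have : V₁ ∈ nhds ((1 : T)⁻¹) := by simpa using hV₁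
        exact hcont.preimage_mem_nhds this
      set V : Set T := V₁ ∩ (fun x : T => x⁻¹) ⁻¹' V₁ with hVdef
      have hV : V ∈ nhds (1 : T) := Filter.inter_mem hV₁ hV₁'
      have hVW : ∀ a ∈ V, ∀ b ∈ V, a⁻¹ * b ∈ W := by
        intro a ha b hb
        exact hV₁W _ ha.2 _ hb.1
      obtain ⟨F, hFfin, hcover⟩ := hfill V hV
      -- decompose every group element along the cover
      have hdec : ∀ g : T, ∃ f v x, f ∈ F ∧ v ∈ V ∧ x ∈ S ∧ g = f * v * x := by
        intro g
        have hg : g ∈ F * V * S := by rw [hcover]; exact Set.mem_univ g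
        rcases hg with ⟨fv, hfv, x, hx, hgx⟩
        rcases hfv with ⟨f, hf, v, hv, rfl⟩
        exact ⟨f, v, x, hf, hv, hx, hgx.symm⟩
      choose ff vv xx hf hv hx heq using hdec
      -- the iteration
      let q : ℕ → T := fun n => Nat.rec (motive := fun _ => T) s⁻¹
        (fun _ g => ff g * vv g * s⁻¹) n
      have hq0 : q 0 = s⁻¹ := rfl
      have hqs : ∀ n, q (n + 1) = ff (q n) * vv (q n) * s⁻¹ := fun n => rfl
      -- key telescoping relation
      have hkey : ∀ n, (ff (q (n + 1)) * vv (q (n + 1))) * (xx (q (n + 1)) * s)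
          = ff (q n) * vv (q n) := by
        intro n
        have h1 : q (n + 1) = ff (q (n + 1)) * vv (q (n + 1)) * xx (q (n + 1)) := heq _
        have h2 : q (n + 1) = ff (q n) * vv (q n) * s⁻¹ := hqs n
        calc (ff (q (n + 1)) * vv (q (n + 1))) * (xx (q (n + 1)) * s)
            = (ff (q (n + 1)) * vv (q (n + 1)) * xx (q (n + 1))) * s := by
              simp only [mul_assoc]
          _ = q (n + 1) * s := by rw [← h1]
          _ = (ff (q n) * vv (q n) * s⁻¹) * s := by rw [← h2]
          _ = ff (q n) * vv (q n) := by simp [mul_assoc]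
      -- telescoped version
      have htel : ∀ m i : ℕ, ∃ z ∈ S,
          (ff (q (i + m + 1)) * vv (q (i + m + 1))) * (z * s) = ff (q i) * vv (q i) := by
        intro m
        induction m with
        | zero =>
          intro i
          exact ⟨xx (q (i + 1)), hx _, hkey i⟩
        | succ m ih =>
          intro i
          obtain ⟨z, hz, hzeq⟩ := ih i
          refine ⟨xx (q (i + m + 2)) * s * z, hmul _ (hmul _ (hx _) _ hs) _ hz, ?_⟩
          have hk := hkey (i + m + 1)
          have : i + (m + 1) + 1 = (i + m + 1) + 1 := by omega
          rw [this]
          calc (ff (q (i + m + 1 + 1)) * vv (q (i + m + 1 + 1))) * (xx (q (i + m + 2)) * s * z * s)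
              = ((ff (q (i + m + 1 + 1)) * vv (q (i + m + 1 + 1)))
                  * (xx (q (i + m + 1 + 1)) * s)) * (z * s) := by
                have h2 : i + m + 2 = i + m + 1 + 1 := by omega
                rw [h2]
                simp only [mul_assoc]
            _ = (ff (q (i + m + 1)) * vv (q (i + m + 1))) * (z * s) := by rw [hk]
            _ = ff (q i) * vv (q i) := hzeq
      -- pigeonhole on the finite set `F`
      have hmain : ∀ i j : ℕ, i < j → ff (q i) = ff (q j) → ∃ z ∈ S, z * s ∈ W := by
        intro i j hij hfe
        obtain ⟨z, hz, hzeq⟩ := htel (j - i - 1) i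
        have hji : i + (j - i - 1) + 1 = j := by omega
        rw [hji] at hzeq
        refine ⟨z, hz, ?_⟩
        -- from (f * vj) * (z * s) = f * vi, conclude z * s = vj⁻¹ * vi
        rw [← hfe] at hzeq
        have hcanc : vv (q j) * (z * s) = vv (q i) := by
          apply mul_left_cancel (a := ff (q i))
          calc ff (q i) * (vv (q j) * (z * s)) = (ff (q i) * vv (q j)) * (z * s) := by
                rw [mul_assoc]
            _ = ff (q i) * vv (q i) := hzeq
        have hzs : z * s = (vv (q j))⁻¹ * vv (q i) := by
          rw [← hcanc, inv_mul_cancel_left]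
        rw [hzs]
        exact hVW _ (hv _) _ (hv _)
      haveI : Finite ↥F := hFfin.to_subtype
      obtain ⟨i, j, hij, hfe⟩ :=
        Finite.exists_ne_map_eq_of_infinite (fun n : ℕ => (⟨ff (q n), hf (q n)⟩ : F))
      have hfe' : ff (q i) = ff (q j) := congrArg Subtype.val hfe
      rcases hij.lt_or_gt with h | h
      · exact hmain i j h hfe'
      · exact hmain j i h hfe'.symm
    -- use closedness of `S * {s}` to conclude `s⁻¹ ∈ S`
    have hCclosed : IsClosed ((fun z : T => z * s) '' S) :=
      (Homeomorph.mulRight s).isClosedMap _ hclosed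
    have h1C : (1 : T) ∈ closure ((fun z : T => z * s) '' S) := by
      rw [mem_closure_iff_nhds]
      intro U hU
      obtain ⟨z, hz, hzs⟩ := hA U hU
      exact ⟨z * s, hzs, ⟨z, hz, rfl⟩⟩
    rw [hCclosed.closure_eq] at h1C
    obtain ⟨z, hz, hz1⟩ := h1C
    have : z = s⁻¹ := eq_inv_of_mul_eq_one_left hz1
    rwa [this] at hz
  constructor
  · obtain ⟨s₀, hs₀⟩ := hne
    have h := hmul _ (hinv s₀ hs₀) _ hs₀
    simpa using h
  · exact hinv
end

section
/- Let T be a Hausdorff topological group and let S be a closed subsemigroup of T that contains a co-compact closed subgroup H of T. Then S is itself a co-compact closed subgroup of T. -/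
open Topology

/-- A closed subsemigroup `S` of a Hausdorff topological group `T` containing a co-compact
closed subgroup `H` of `T` is itself a co-compact closed subgroup of `T`. -/
theorem cocompact_subgroup_of_closed_subsemigroup
    {T : Type*} [Group T] [TopologicalSpace T] [IsTopologicalGroup T] [T2Space T]
    (S : Set T) (hne : S.Nonempty) (hclosed : IsClosed S)
    (hmul : ∀ a ∈ S, ∀ b ∈ S, a * b ∈ S)
    (H : Subgroup T) (hHclosed : IsClosed (H : Set T)) (hcc : CompactSpace (T ⧸ H))
    (hHS : (H : Set T) ⊆ S) :
    ∃ S' : Subgroup T, (S' : Set T) = S ∧ CompactSpace (T ⧸ S') := by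
  classical
  have one_S : (1 : T) ∈ S := hHS H.one_mem
  have hSH : ∀ w ∈ S, ∀ h ∈ H, w * h ∈ S := fun w hw h hh => hmul w hw h (hHS hh)
  have hqm : IsQuotientMap (QuotientGroup.mk : T → T ⧸ H) := isQuotientMap_quotient_mk'
  -- the basic family of subsets of T ⧸ H
  set D : T → Set (T ⧸ H) := fun k => (fun w => ((k * w : T) : T ⧸ H)) '' S with hD
  have mem_D : ∀ (k : T) (x : T ⧸ H), x ∈ D k ↔ ∃ w ∈ S, ((k * w : T) : T ⧸ H) = x := by
    intro k x
    simp [hD, Set.mem_image]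
  -- preimage of D k is k * S
  have hpre : ∀ k : T, (QuotientGroup.mk ⁻¹' (D k) : Set T) = (fun w => k * w) '' S := by
    intro k
    ext x
    simp only [Set.mem_preimage, mem_D, Set.mem_image]
    constructor
    · rintro ⟨w, hw, hwx⟩
      have hx : w⁻¹ * (k⁻¹ * x) ∈ H := by
        have := (QuotientGroup.eq (s := H) (a := k * w) (b := x)).mp hwx
        simpa [mul_assoc] using this
      refine ⟨w * (w⁻¹ * (k⁻¹ * x)), hSH w hw _ hx, ?_⟩
      group
    · rintro ⟨w, hw, rfl⟩
      exact ⟨w, hw, rfl⟩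
  have hDclosed : ∀ k : T, IsClosed (D k) := by
    intro k
    rw [← hqm.isClosed_preimage, hpre k]
    exact (Homeomorph.mulLeft k).isClosedMap _ hclosed
  have hDcompact : ∀ k : T, IsCompact (D k) := fun k => (hDclosed k).isCompact
  have hDne : ∀ k : T, (D k).Nonempty := fun k => ⟨_, ⟨1, one_S, rfl⟩⟩
  -- monotonicity: for u ∈ S, D (k * u) ⊆ D k
  have hmono : ∀ (k : T), ∀ u ∈ S, D (k * u) ⊆ D k := by
    rintro k u hu x ⟨w, hw, rfl⟩
    exact ⟨u * w, hmul u hu w hw, by simp [mul_assoc]⟩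
  -- D is H-saturated in its argument
  have hsat : ∀ (a : T), ∀ h ∈ H, D (a * h) = D a := by
    intro a h hh
    apply Set.Subset.antisymm
    · rintro x ⟨w, hw, rfl⟩
      refine ⟨h * w, hmul h (hHS hh) w hw, by simp [mul_assoc]⟩
    · rintro x ⟨w, hw, rfl⟩
      refine ⟨h⁻¹ * w, hmul h⁻¹ (hHS (H.inv_mem hh)) w hw, by
        simp [mul_assoc]⟩
  -- membership in D 1 forces membership in S
  have hD1 : ∀ a : T, (a : T ⧸ H) ∈ D 1 → a ∈ S := by
    intro a ha
    rcases (mem_D 1 a).mp ha with ⟨w, hw, hwa⟩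
    have : (1 * w)⁻¹ * a ∈ H := QuotientGroup.eq.mp hwa
    rw [one_mul] at this
    have := hSH w hw _ this
    simpa using this
  have hDsubS : ∀ k ∈ S, D k ⊆ D 1 := by
    intro k hk
    have := hmono 1 k hk
    simpa using this
  -- the family for Zorn
  set F : Set (Set (T ⧸ H)) := {A | ∃ k ∈ S, A = D k} with hF
  have hzorn : ∃ M, Minimal (· ∈ F) M := by
    apply zorn_superset
    intro c hcF hchain
    rcases Set.eq_empty_or_nonempty c with rfl | ⟨A₀, hA₀⟩
    · exact ⟨D 1, ⟨1, one_S, rfl⟩, by simp⟩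
    -- nonempty chain
    have hKclosed : ∀ A : Set (T ⧸ H), IsClosed A →
        IsClosed (QuotientGroup.mk '' {a : T | D a ⊆ A} : Set (T ⧸ H)) := by
      intro A hA
      have hTclosed : IsClosed {a : T | D a ⊆ A} := by
        have : {a : T | D a ⊆ A} = ⋂ w ∈ S, (fun a : T => ((a * w : T) : T ⧸ H)) ⁻¹' A := by
          ext a
          simp only [Set.mem_setOf_eq, Set.mem_iInter, Set.mem_preimage]
          constructor
          · intro h w hw; exact h ⟨w, hw, rfl⟩
          · rintro h x ⟨w, hw, rfl⟩; exact h w hw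
        rw [this]
        exact isClosed_biInter fun w _ => hA.preimage
          ((continuous_quotient_mk').comp (continuous_mul_right w))
      rw [← hqm.isClosed_preimage]
      have : ((QuotientGroup.mk : T → T ⧸ H) ⁻¹' ((QuotientGroup.mk : T → T ⧸ H) '' {a : T | D a ⊆ A}))
          = {a : T | D a ⊆ A} := by
        ext x
        simp only [Set.mem_preimage, Set.mem_image, Set.mem_setOf_eq]
        constructor
        · rintro ⟨a, ha, hax⟩
          have hmem : a⁻¹ * x ∈ H := QuotientGroup.eq.mp hax
          have : D x = D a := by
            have := hsat a (a⁻¹ * x) hmem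
            simpa [mul_assoc] using this
          rwa [this]
        · intro hx; exact ⟨x, hx, rfl⟩
      rw [this]
      exact hTclosed
    -- apply the compactness FIP lemma to the sets K A over the chain
    have : Nonempty c := ⟨⟨A₀, hA₀⟩⟩
    set K : c → Set (T ⧸ H) :=
      fun A => QuotientGroup.mk '' {a : T | D a ⊆ (A : Set (T ⧸ H))} with hK
    have hKmono : ∀ (A B : c), (A : Set (T ⧸ H)) ⊆ B → K A ⊆ K B := by
      rintro A B hAB x ⟨a, ha, rfl⟩
      exact ⟨a, Set.Subset.trans ha hAB, rfl⟩
    have hclosedA : ∀ A : c, IsClosed (A : Set (T ⧸ H)) := by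
      rintro ⟨A, hA⟩
      rcases hcF hA with ⟨k, _, rfl⟩
      exact hDclosed k
    have hKdir : Directed (· ⊇ ·) K := by
      intro A B
      rcases eq_or_ne A B with rfl | hAB
      · exact ⟨A, le_refl _, le_refl _⟩
      · rcases hchain (Subtype.coe_prop A) (Subtype.coe_prop B)
          (fun h => hAB (Subtype.ext h)) with h | h
        · exact ⟨A, le_refl _, hKmono A B h⟩
        · exact ⟨B, hKmono B A h, le_refl _⟩
    have hKne : ∀ A : c, (K A).Nonempty := by
      intro A
      obtain ⟨k, hk, hkD⟩ := hcF A.2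
      refine ⟨(k : T ⧸ H), ⟨k, ?_, rfl⟩⟩
      show D k ⊆ (A : Set (T ⧸ H))
      rw [hkD]
    have hKcl : ∀ A : c, IsClosed (K A) := fun A => hKclosed _ (hclosedA A)
    have hKcp : ∀ A : c, IsCompact (K A) := fun A => (hKcl A).isCompact
    obtain ⟨x, hx⟩ :=
      IsCompact.nonempty_iInter_of_directed_nonempty_isCompact_isClosed K hKdir hKne hKcp hKcl
    obtain ⟨a, rfl⟩ : ∃ a : T, (a : T ⧸ H) = x := by
      obtain ⟨a, ha⟩ := Quotient.exists_rep x
      exact ⟨a, ha⟩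
    have haA : ∀ A : c, D a ⊆ (A : Set (T ⧸ H)) := by
      intro A
      have hxA := Set.mem_iInter.mp hx A
      rcases hxA with ⟨b, hb, hba⟩
      have hmem : b⁻¹ * a ∈ H := QuotientGroup.eq.mp hba
      have : D a = D b := by
        have := hsat b (b⁻¹ * a) hmem
        simpa [mul_assoc] using this
      exact this ▸ hb
    have haS : a ∈ S := by
      apply hD1
      have h1 : (a : T ⧸ H) ∈ D a := ⟨1, one_S, by simp⟩
      rcases hcF hA₀ with ⟨k, hk, hkD⟩
      have h2 : (a : T ⧸ H) ∈ A₀ := haA ⟨A₀, hA₀⟩ h1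
      rw [hkD] at h2
      exact hDsubS k hk h2
    exact ⟨D a, ⟨a, haS, rfl⟩, fun A hA => haA ⟨A, hA⟩⟩
  obtain ⟨M, hMF, hMmin⟩ := hzorn
  obtain ⟨m, hmS, rfl⟩ := hMF
  -- key step: every element of S has its inverse in S
  have hinv : ∀ u ∈ S, u⁻¹ ∈ S := by
    intro u hu
    have hsub : D (m * u) ⊆ D m := hmono m u hu
    have heq : D (m * u) = D m :=
      le_antisymm hsub (hMmin ⟨m * u, hmul m hmS u hu, rfl⟩ hsub)
    have hmmem : (m : T ⧸ H) ∈ D (m * u) := by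
      rw [heq]
      exact ⟨1, one_S, by simp⟩
    rcases (mem_D (m * u) m).mp hmmem with ⟨w, hw, hwm⟩
    have hmem : (m * u * w)⁻¹ * m ∈ H := QuotientGroup.eq.mp hwm
    have hmem' : w⁻¹ * u⁻¹ ∈ H := by
      have : (m * u * w)⁻¹ * m = w⁻¹ * u⁻¹ := by group
      rwa [this] at hmem
    have : w * (w⁻¹ * u⁻¹) ∈ S := hSH w hw _ hmem'
    simpa using this
  -- build the subgroup
  refine ⟨{ carrier := S
            one_mem' := one_S
            mul_mem' := fun ha hb => hmul _ ha _ hb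
            inv_mem' := fun ha => hinv _ ha }, rfl, ?_⟩
  set S' : Subgroup T :=
    { carrier := S
      one_mem' := one_S
      mul_mem' := fun ha hb => hmul _ ha _ hb
      inv_mem' := fun ha => hinv _ ha } with hS'
  -- T ⧸ S' is a continuous surjective image of the compact T ⧸ H
  have hle : ∀ a b : T, @Setoid.r T (QuotientGroup.leftRel H) a b →
      @Setoid.r T (QuotientGroup.leftRel S') (id a) (id b) := by
    intro a b hab
    rw [QuotientGroup.leftRel_apply] at hab ⊢
    exact hHS hab
  set f : T ⧸ H → T ⧸ S' := Quotient.map' id hle with hf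
  have hfmk : ∀ a : T, f ((a : T ⧸ H)) = (a : T ⧸ S') := fun a => rfl
  have hfcont : Continuous f := by
    rw [hqm.continuous_iff]
    have : (f ∘ (QuotientGroup.mk : T → T ⧸ H)) = (QuotientGroup.mk : T → T ⧸ S') := by
      funext a; exact hfmk a
    rw [this]
    exact continuous_quotient_mk'
  have hfsurj : Function.Surjective f := by
    intro x
    obtain ⟨a, rfl⟩ := Quotient.exists_rep x
    exact ⟨(a : T ⧸ H), rfl⟩
  refine ⟨?_⟩
  have huniv : (Set.univ : Set (T ⧸ S')) = f '' Set.univ := by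
    rw [Set.image_univ, hfsurj.range_eq]
  rw [huniv]
  exact isCompact_univ.image hfcont
end

section
/- Let T be a Hausdorff topological group and let S be a syndetic closed subsemigroup of T. Then S is a syndetic closed subgroup of T. -/
open Pointwise

private theorem mem_mul_singleton' {T : Type*} [Group T] (S : Set T) (a x : T) :
    x ∈ S * ({a} : Set T) ↔ ∃ s ∈ S, s * a = x := by
  rw [Set.mul_singleton, Set.mem_image]

private theorem one_mem_syndetic_closed_subsemigroup
    {T : Type*} [Group T] [TopologicalSpace T] [IsTopologicalGroup T] [T2Space T]
    (S : Set T) (hclosed : IsClosed S)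
    (hmul : ∀ a ∈ S, ∀ b ∈ S, a * b ∈ S) (hsyn : Syndetic S) : (1 : T) ∈ S := by
  obtain ⟨K, hK, hKS⟩ := hsyn
  -- for every t, some element of S * t lies in K
  have key : ∀ t : T, ∃ s ∈ S, s * t ∈ K := by
    intro t
    have ht : t⁻¹ ∈ K⁻¹ * S := by rw [hKS]; exact Set.mem_univ _
    rw [Set.mem_mul] at ht
    obtain ⟨k, hk, s, hs, hks⟩ := ht
    rw [Set.mem_inv] at hk
    refine ⟨s, hs, ?_⟩
    have hst : s * t = k⁻¹ := by
      have h1 : t = s⁻¹ * k⁻¹ := by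
        rw [← mul_inv_rev, hks, inv_inv]
      rw [h1, ← mul_assoc, mul_inv_cancel, one_mul]
    rw [hst]; exact hk
  -- the family of candidate compact sets
  set F : Set (Set T) := {C | C.Nonempty ∧ IsClosed C ∧ C ⊆ K ∩ S ∧
      ∀ s ∈ S, ∀ c ∈ C, s * c ∈ K → s * c ∈ C} with hF
  have hKSclosed : IsClosed (K ∩ S) := (hK.isClosed).inter hclosed
  have hcompact : ∀ C ∈ F, IsCompact C := by
    rintro C ⟨-, hCcl, hCsub, -⟩
    exact (hK.inter_right hclosed).of_isClosed_subset hCcl hCsub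
  have hKSmem : (K ∩ S) ∈ F := by
    refine ⟨?_, hKSclosed, le_refl _, ?_⟩
    · obtain ⟨s, hs, hsK⟩ := key 1
      exact ⟨s * 1, hsK, by simpa using hs⟩
    · rintro s hs c ⟨hcK, hcS⟩ hscK
      exact ⟨hscK, hmul s hs c hcS⟩
  -- Zorn: a minimal member of F
  obtain ⟨m, -, hmin⟩ : ∃ m, m ⊆ K ∩ S ∧ Minimal (· ∈ F) m := by
    apply zorn_superset_nonempty F ?_ _ hKSmem
    intro c hcF hchain hcne
    refine ⟨⋂₀ c, ⟨?_, ?_, ?_, ?_⟩, fun s hs => Set.sInter_subset_of_mem hs⟩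
    · haveI : Nonempty c := hcne.to_subtype
      refine IsCompact.nonempty_sInter_of_directed_nonempty_isCompact_isClosed
        ?_ (fun U hU => (hcF hU).1) (fun U hU => hcompact U (hcF hU))
        (fun U hU => (hcF hU).2.1)
      intro x hx y hy
      rcases hchain.total hx hy with h | h
      · exact ⟨x, hx, subset_rfl, h⟩
      · exact ⟨y, hy, h, subset_rfl⟩
    · exact isClosed_sInter fun U hU => (hcF hU).2.1
    · obtain ⟨U, hU⟩ := hcne
      exact (Set.sInter_subset_of_mem hU).trans (hcF hU).2.2.1
    · intro s hs x hx hsxK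
      rw [Set.mem_sInter] at hx ⊢
      intro U hU
      exact (hcF hU).2.2.2 s hs x (hx U hU) hsxK
  obtain ⟨⟨⟨c, hc⟩, hmcl, hmsub, hminv⟩, hminimal⟩ := hmin
  have hcS : c ∈ S := (hmsub hc).2
  -- the set K ∩ (S * {c}) is in F and contained in m
  have hScclosed : IsClosed (S * ({c} : Set T)) := by
    rw [Set.mul_singleton]
    exact (Homeomorph.mulRight c).isClosedMap _ hclosed
  have hC' : (K ∩ (S * ({c} : Set T))) ∈ F := by
    refine ⟨?_, hK.isClosed.inter hScclosed, ?_, ?_⟩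
    · obtain ⟨s, hs, hsK⟩ := key c
      exact ⟨s * c, hsK, (mem_mul_singleton' S c _).mpr ⟨s, hs, rfl⟩⟩
    · rintro x ⟨hxK, hxS⟩
      obtain ⟨s, hs, rfl⟩ := (mem_mul_singleton' S c x).mp hxS
      exact ⟨hxK, hmul s hs c hcS⟩
    · rintro s hs x ⟨-, hxS⟩ hsxK
      obtain ⟨s', hs', rfl⟩ := (mem_mul_singleton' S c x).mp hxS
      refine ⟨hsxK, (mem_mul_singleton' S c _).mpr ⟨s * s', hmul s hs s' hs', ?_⟩⟩
      rw [mul_assoc]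
  have hC'sub : (K ∩ (S * ({c} : Set T))) ⊆ m := by
    rintro x ⟨hxK, hxS⟩
    obtain ⟨s, hs, rfl⟩ := (mem_mul_singleton' S c x).mp hxS
    exact hminv s hs c hc hxK
  have hEq : (K ∩ (S * ({c} : Set T))) = m :=
    Set.Subset.antisymm hC'sub (hminimal hC' hC'sub)
  have hcmem : c ∈ K ∩ (S * ({c} : Set T)) := hEq ▸ hc
  obtain ⟨-, hcS'⟩ := hcmem
  obtain ⟨s, hs, hsc⟩ := (mem_mul_singleton' S c c).mp hcS'
  have hs1 : s = 1 := mul_right_cancel (b := c) (by rw [hsc, one_mul])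
  exact hs1 ▸ hs

/-- A syndetic closed subsemigroup `S` of a Hausdorff topological group `T` is a syndetic
closed subgroup of `T`. -/
theorem syndetic_closed_subsemigroup_is_subgroup
    {T : Type*} [Group T] [TopologicalSpace T] [IsTopologicalGroup T] [T2Space T]
    (S : Set T) (hne : S.Nonempty) (hclosed : IsClosed S)
    (hmul : ∀ a ∈ S, ∀ b ∈ S, a * b ∈ S) (hsyn : Syndetic S) :
    ∃ S' : Subgroup T, (S' : Set T) = S ∧ IsClosed (S' : Set T) ∧ Syndetic (S' : Set T) := by
  have hone : (1 : T) ∈ S := one_mem_syndetic_closed_subsemigroup S hclosed hmul hsyn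
  have hinv : ∀ a ∈ S, a⁻¹ ∈ S := by
    intro a ha
    -- S * {a} is a syndetic closed subsemigroup
    have hclosed' : IsClosed (S * ({a} : Set T)) := by
      rw [Set.mul_singleton]
      exact (Homeomorph.mulRight a).isClosedMap _ hclosed
    have hmul' : ∀ x ∈ S * ({a} : Set T), ∀ y ∈ S * ({a} : Set T),
        x * y ∈ S * ({a} : Set T) := by
      intro x hx y hy
      obtain ⟨s, hs, rfl⟩ := (mem_mul_singleton' S a x).mp hx
      obtain ⟨s', hs', rfl⟩ := (mem_mul_singleton' S a y).mp hy
      refine (mem_mul_singleton' S a _).mpr ⟨s * (a * s'), hmul s hs _ (hmul a ha s' hs'), ?_⟩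
      group
    have hsyn' : Syndetic (S * ({a} : Set T)) := by
      obtain ⟨K, hK, hKS⟩ := hsyn
      refine ⟨K, hK, ?_⟩
      rw [← mul_assoc, hKS]
      ext x
      simp only [Set.mem_univ, iff_true]
      exact (mem_mul_singleton' Set.univ a x).mpr ⟨x * a⁻¹, Set.mem_univ _, by group⟩
    have h1 : (1 : T) ∈ S * ({a} : Set T) :=
      one_mem_syndetic_closed_subsemigroup _ hclosed' hmul' hsyn'
    obtain ⟨s, hs, hsa⟩ := (mem_mul_singleton' S a 1).mp h1
    have : a⁻¹ = s := (eq_inv_of_mul_eq_one_left hsa).symm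
    exact this ▸ hs
  refine ⟨⟨⟨⟨S, fun {x y} hx hy => hmul x hx y hy⟩, hone⟩, fun {x} hx => hinv x hx⟩,
    rfl, hclosed, hsyn⟩
end

section
/- Let T be an abelian Hausdorff topological group acting continuously and minimally on a compact Hausdorff space X, and let H be a co-compact closed subgroup of T. Then the x-envelope of H is independent of the base point: E_x[H] = E_y[H] for all x, y ∈ X. -/
open MulAction Set Filter Topology Pointwise

section Aux

variable {T X : Type*} [CommGroup T] [TopologicalSpace T] [IsTopologicalGroup T]
    [TopologicalSpace X] [CompactSpace X] [T2Space X] [MulAction T X] [ContinuousSMul T X]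
    (H : Subgroup T)

/-- In an abelian group action, two scalars commute. -/
private lemma aux_smul_comm (a b : T) (z : X) : a • b • z = b • a • z := by
  rw [smul_smul, smul_smul, mul_comm]

/-- The orbit of `t • x` under a subgroup is the translate of the orbit of `x`. -/
private lemma aux_orbit_smul (t : T) (x : X) : orbit H (t • x) = t • orbit H x := by
  ext z
  constructor
  · rintro ⟨h, hh⟩
    refine ⟨(h : T) • x, ⟨h, rfl⟩, ?_⟩
    show t • (h : T) • x = z
    rw [aux_smul_comm]
    exact hh
  · rintro ⟨w, ⟨h, hh⟩, rfl⟩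
    refine ⟨h, ?_⟩
    show (h : T) • t • x = t • w
    rw [aux_smul_comm]
    exact congrArg (t • ·) hh

private lemma aux_closure_orbit_smul (t : T) (x : X) :
    closure (orbit H (t • x)) = t • closure (orbit H x) := by
  rw [aux_orbit_smul, closure_smul]

/-- The closure of an `H`-orbit is `H`-invariant. -/
private lemma aux_H_smul_closure {h : T} (hh : h ∈ H) (x : X) :
    h • closure (orbit H x) = closure (orbit H x) := by
  rw [← aux_closure_orbit_smul]
  have : h • x = (⟨h, hh⟩ : H) • x := rfl
  rw [this, orbit_smul]

private lemma aux_H_smul_mem {h : T} (hh : h ∈ H) {x q : X}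
    (hq : q ∈ closure (orbit H x)) : h • q ∈ closure (orbit H x) := by
  have := smul_mem_smul_set (a := h) hq
  rwa [aux_H_smul_closure H hh] at this

/-- If `q` lies in the closure of the `H`-orbit of `x`, the closure of the `H`-orbit of `q`
is contained in that of `x`. -/
private lemma aux_orbit_closure_subset {x q : X} (hq : q ∈ closure (orbit H x)) :
    closure (orbit H q) ⊆ closure (orbit H x) := by
  apply closure_minimal _ isClosed_closure
  rintro z ⟨h, hh⟩
  rw [← hh]
  exact aux_H_smul_mem H h.2 hq

/-- Tube lemma for the action: a neighborhood of `1` moving a compact set into an open set. -/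
private lemma aux_tube {Q : Set X} (hQc : IsCompact Q) {U : Set X} (hU : IsOpen U)
    (hQU : Q ⊆ U) : ∃ V ∈ 𝓝 (1 : T), V • Q ⊆ U := by
  have hP : IsOpen ((fun p : T × X => p.1 • p.2) ⁻¹' U) :=
    hU.preimage continuous_smul
  have key : ∀ q ∈ Q, ∃ VO : Set T × Set X, IsOpen VO.1 ∧ IsOpen VO.2 ∧ (1 : T) ∈ VO.1 ∧
      q ∈ VO.2 ∧ ∀ v ∈ VO.1, ∀ z ∈ VO.2, v • z ∈ U := by
    intro q hq
    have hmem : ((1 : T), q) ∈ (fun p : T × X => p.1 • p.2) ⁻¹' U := by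
      simp only [mem_preimage, one_smul]
      exact hQU hq
    obtain ⟨V, O, hVo, hOo, h1V, hqO, hsub⟩ := isOpen_prod_iff.mp hP 1 q hmem
    exact ⟨(V, O), hVo, hOo, h1V, hqO, fun v hv z hz => hsub (Set.mk_mem_prod hv hz)⟩
  choose! VO hV1 hV2 hV3 hV4 hV5 using key
  obtain ⟨F, hFcover⟩ := hQc.elim_nhds_subcover' (fun q hq => (VO q).2)
    (fun q hq => ((hV2 q hq)).mem_nhds (hV4 q hq))
  refine ⟨⋂ q ∈ F, (VO (q : X)).1, ?_, ?_⟩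
  · exact (biInter_finset_mem F).mpr fun q _ => ((hV1 q q.2)).mem_nhds (hV3 q q.2)
  · rintro z ⟨v, hv, q, hq, rfl⟩
    obtain ⟨i, hiF, hqO⟩ := mem_iUnion₂.mp (hFcover hq)
    exact hV5 i i.2 v (mem_iInter₂.mp hv i hiF) q hqO

/-- A point lying in `closure (V • Q)` for all neighborhoods `V` of `1` lies in `Q`
(for compact `Q`). -/
private lemma aux_mem_of_small_nhds {Q : Set X} (hQc : IsCompact Q) {z : X}
    (h : ∀ V ∈ 𝓝 (1 : T), z ∈ closure (V • Q)) : z ∈ Q := by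
  by_contra hz
  have hdisj : Disjoint Q {z} := by
    simp [Set.disjoint_singleton_right, hz]
  have hsep : SeparatedNhds Q {z} :=
    SeparatedNhds.of_isCompact_isCompact hQc isCompact_singleton hdisj
  obtain ⟨U, W, hUo, hWo, hQU, hzW, hUW⟩ := hsep
  obtain ⟨V, hV, hVQ⟩ := aux_tube (T := T) hQc hUo hQU
  have hUW' : U ⊆ Wᶜ := fun a ha hb => (Set.disjoint_iff.mp hUW) ⟨ha, hb⟩
  have hcl : closure (V • Q) ⊆ Wᶜ :=
    closure_minimal (hVQ.trans hUW') hWo.isClosed_compl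
  exact (hcl (h V hV)) (hzW rfl)

private lemma aux_smul_set_assoc (a : T) (V : Set T) (Q : Set X) :
    a • (V • Q) = V • (a • Q) := by
  ext z
  constructor
  · rintro ⟨-, ⟨v, hv, q, hq, rfl⟩, rfl⟩
    exact ⟨v, hv, a • q, smul_mem_smul_set hq, aux_smul_comm v a q⟩
  · rintro ⟨v, hv, -, ⟨q, hq, rfl⟩, rfl⟩
    exact ⟨v • q, ⟨v, hv, q, hq, rfl⟩, aux_smul_comm a v q⟩

/-- Key consequence of co-compactness: every neighborhood `V` of `1` contains some positive
power of `s` modulo `H`. -/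
private lemma aux_pow_mem (hcc : CompactSpace (T ⧸ H)) (s : T) {V : Set T}
    (hV : V ∈ 𝓝 (1 : T)) :
    ∃ k : ℕ, 1 ≤ k ∧ ∃ v ∈ V, ∃ h ∈ H, s ^ k = v * h := by
  haveI := hcc
  haveI : H.Normal := H.normal_of_comm
  obtain ⟨W, hW, hWsplit⟩ := exists_nhds_split_inv hV
  obtain ⟨O, hOW, hOopen, hO1⟩ := mem_nhds_iff.mp hW
  set u : ℕ → T ⧸ H := fun n => ((s ^ (n + 1) : T) : T ⧸ H) with hu
  obtain ⟨c, hc⟩ := exists_clusterPt_of_compactSpace (Filter.map u Filter.atTop)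
  obtain ⟨a, rfl⟩ := QuotientGroup.mk_surjective c
  have hUopen : IsOpen ((QuotientGroup.mk : T → T ⧸ H) '' (a • O)) :=
    QuotientGroup.isOpenMap_coe _ (hOopen.smul a)
  have hUmem : ((a : T) : T ⧸ H) ∈ (QuotientGroup.mk : T → T ⧸ H) '' (a • O) :=
    ⟨a, ⟨1, hO1, mul_one a⟩, rfl⟩
  have hfreq : ∃ᶠ n in Filter.atTop, u n ∈ (QuotientGroup.mk : T → T ⧸ H) '' (a • O) := by
    have hmc : MapClusterPt ((a : T) : T ⧸ H) Filter.atTop u := hc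
    exact mapClusterPt_iff_frequently.mp hmc _ (hUopen.mem_nhds hUmem)
  rw [Filter.frequently_atTop] at hfreq
  obtain ⟨n₁, -, hn₁⟩ := hfreq 0
  obtain ⟨n₂, hn₂ge, hn₂⟩ := hfreq (n₁ + 1)
  obtain ⟨b₁, ⟨o₁, ho₁, rfl⟩, hb₁⟩ := hn₁
  obtain ⟨b₂, ⟨o₂, ho₂, rfl⟩, hb₂⟩ := hn₂
  simp only [hu, smul_eq_mul] at hb₁ hb₂
  -- pass to the (commutative) quotient group
  have e₁ : ((a : T ⧸ H)) * (o₁ : T ⧸ H) = ((s : T ⧸ H)) ^ (n₁ + 1) := by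
    rw [← QuotientGroup.mk_mul, ← QuotientGroup.mk_pow]
    exact hb₁
  have e₂ : ((a : T ⧸ H)) * (o₂ : T ⧸ H) = ((s : T ⧸ H)) ^ (n₂ + 1) := by
    rw [← QuotientGroup.mk_mul, ← QuotientGroup.mk_pow]
    exact hb₂
  have hposs : n₂ - n₁ + (n₁ + 1) = n₂ + 1 := by omega
  have hk : ((s : T ⧸ H)) ^ (n₂ - n₁) =
      ((a : T ⧸ H) * (o₂ : T ⧸ H)) * ((a : T ⧸ H) * (o₁ : T ⧸ H))⁻¹ := by
    rw [e₁, e₂, eq_mul_inv_iff_mul_eq, ← pow_add, hposs]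
  have hABC : ∀ A B C : T ⧸ H, (A * B) * (A * C)⁻¹ = B * C⁻¹ := by
    intro A B C
    rw [mul_inv_rev, mul_comm A B, mul_assoc, mul_comm C⁻¹ A⁻¹, mul_inv_cancel_left]
  have hvq : ((s : T ⧸ H)) ^ (n₂ - n₁) = (o₂ : T ⧸ H) * ((o₁ : T ⧸ H))⁻¹ := by
    rw [hk, hABC]
  -- the correcting element lies in `H`
  have hmemH : (o₂ * o₁⁻¹)⁻¹ * s ^ (n₂ - n₁) ∈ H := by
    rw [← QuotientGroup.eq_one_iff]
    rw [QuotientGroup.mk_mul, QuotientGroup.mk_pow, QuotientGroup.mk_inv,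
      QuotientGroup.mk_mul, QuotientGroup.mk_inv, hvq, inv_mul_cancel]
  have hvV : o₂ * o₁⁻¹ ∈ V := by
    have := hWsplit o₂ (hOW ho₂) o₁ (hOW ho₁)
    rwa [div_eq_mul_inv] at this
  exact ⟨n₂ - n₁, by omega, o₂ * o₁⁻¹, hvV, (o₂ * o₁⁻¹)⁻¹ * s ^ (n₂ - n₁), hmemH,
    (mul_inv_cancel_left _ _).symm⟩

/-- If `s⁻¹` maps the orbit closure into itself, then so does `s`. -/
private lemma aux_smul_of_inv_smul (hcc : CompactSpace (T ⧸ H)) {x : X} {s : T}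
    (hs : ∀ q ∈ closure (orbit H x), s⁻¹ • q ∈ closure (orbit H x)) :
    ∀ q ∈ closure (orbit H x), s • q ∈ closure (orbit H x) := by
  set Q := closure (orbit H x) with hQ
  have hQc : IsCompact Q := isClosed_closure.isCompact
  have hpow : ∀ j : ℕ, ∀ q ∈ Q, (s⁻¹) ^ j • q ∈ Q := by
    intro j
    induction j with
    | zero => intro q hq; simpa using hq
    | succ n ih =>
      intro q hq
      have : (s⁻¹) ^ (n + 1) • q = s⁻¹ • ((s⁻¹) ^ n • q) := by
        rw [smul_smul, ← pow_succ']
      rw [this]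
      exact hs _ (ih q hq)
  intro q hq
  apply aux_mem_of_small_nhds (T := T) hQc
  intro V hV
  obtain ⟨k, hk1, v, hvV, h, hH, hsk⟩ := aux_pow_mem H hcc s hV
  have hq' : (s⁻¹) ^ (k - 1) • q ∈ Q := hpow (k - 1) q hq
  have hmul : s ^ k * (s⁻¹) ^ (k - 1) = s := by
    have hk' : k = (k - 1) + 1 := by omega
    rw [inv_pow, hk']
    rw [pow_succ, mul_comm (s ^ (k - 1)) s, mul_assoc]
    simp
  have hss : s • q = s ^ k • ((s⁻¹) ^ (k - 1) • q) := by
    rw [smul_smul, hmul]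
  have : s • q = v • (h • ((s⁻¹) ^ (k - 1) • q)) := by
    rw [hss, hsk, mul_smul]
  rw [this]
  exact subset_closure (Set.smul_mem_smul hvV (aux_H_smul_mem H hH hq'))

/-- Reachability: using minimality and co-compactness, every point `z` is in some translate
of the orbit closure of `w`. -/
private lemma aux_reach (hmin : ∀ x : X, Dense (orbit T x)) (hcc : CompactSpace (T ⧸ H))
    (w z : X) : ∃ s : T, s⁻¹ • z ∈ closure (orbit H w) := by
  haveI := hcc
  set Q := closure (orbit H w) with hQdef
  have hQc : IsCompact Q := isClosed_closure.isCompact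
  set π : T → T ⧸ H := QuotientGroup.mk with hπdef
  have hπopen : IsOpenMap π := QuotientGroup.isOpenMap_coe
  set D : Set T → Set T := fun V => {s : T | s⁻¹ • z ∈ closure (V • Q)} with hDdef
  have hDclosed : ∀ V, IsClosed (D V) := by
    intro V
    have : Continuous fun s : T => s⁻¹ • z := (continuous_inv).smul continuous_const
    exact isClosed_closure.preimage this
  have hDsat : ∀ V : Set T, ∀ s s' : T, π s = π s' → s ∈ D V → s' ∈ D V := by
    intro V s s' hss' hs
    have hmem : s⁻¹ * s' ∈ H := QuotientGroup.eq.mp hss'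
    have hs' : s' = s * (s⁻¹ * s') := by rw [mul_inv_cancel_left]
    have hinv : (s⁻¹ * s')⁻¹ ∈ H := H.inv_mem hmem
    have : s'⁻¹ • z = (s⁻¹ * s')⁻¹ • (s⁻¹ • z) := by
      rw [smul_smul, ← mul_inv_rev, ← hs']
    simp only [hDdef, mem_setOf_eq] at hs ⊢
    rw [this]
    have hVQ : (s⁻¹ * s')⁻¹ • closure (V • Q) = closure (V • Q) := by
      rw [← closure_smul, aux_smul_set_assoc, hQdef, aux_H_smul_closure H hinv]
    rw [← hVQ]
    exact smul_mem_smul_set hs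
  set C : Set T → Set (T ⧸ H) := fun V => π '' D V with hCdef
  have hCcompl : ∀ V, (C V)ᶜ = π '' (D V)ᶜ := by
    intro V
    ext c
    constructor
    · intro hc
      obtain ⟨a, rfl⟩ := QuotientGroup.mk_surjective c
      refine ⟨a, fun ha => hc ⟨a, ha, rfl⟩, rfl⟩
    · rintro ⟨b, hb, rfl⟩ ⟨s, hs, hss⟩
      exact hb (hDsat V s b hss hs)
  have hCclosed : ∀ V, IsClosed (C V) := by
    intro V
    rw [← isOpen_compl_iff, hCcompl]
    exact hπopen _ (hDclosed V).isOpen_compl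
  have hCne : ∀ V ∈ 𝓝 (1 : T), (C V).Nonempty := by
    intro V hV
    obtain ⟨O, hOV, hOopen, hO1⟩ := mem_nhds_iff.mp hV
    have hcover : (univ : Set (T ⧸ H)) ⊆ ⋃ f : T, π '' (f • O) := by
      intro c _
      obtain ⟨a, rfl⟩ := QuotientGroup.mk_surjective c
      exact mem_iUnion.mpr ⟨a, ⟨a, ⟨1, hO1, mul_one a⟩, rfl⟩⟩
    obtain ⟨F, hF⟩ := isCompact_univ.elim_finite_subcover (fun f : T => π '' (f • O))
      (fun f => hπopen _ (hOopen.smul f)) hcover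
    have horb : orbit T w ⊆ ⋃ f ∈ F, f • closure (O • Q) := by
      rintro - ⟨t, rfl⟩
      have : π t ∈ ⋃ f ∈ F, π '' (f • O) := hF (mem_univ _)
      obtain ⟨f, hfF, b, ⟨o, ho, rfl⟩, hfb⟩ := mem_iUnion₂.mp this
      simp only [smul_eq_mul] at hfb
      have hmem : (f * o)⁻¹ * t ∈ H := QuotientGroup.eq.mp hfb
      have ht : t = f * o * ((f * o)⁻¹ * t) := by rw [mul_inv_cancel_left]
      have hhw : ((f * o)⁻¹ * t) • w ∈ Q := by
        apply subset_closure
        exact ⟨⟨_, hmem⟩, rfl⟩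
      have heq : t • w = f • (o • (((f * o)⁻¹ * t) • w)) := by
        rw [smul_smul, smul_smul, ← ht]
      show t • w ∈ ⋃ f ∈ F, f • closure (O • Q)
      rw [heq]
      exact mem_biUnion hfF
        (smul_mem_smul_set (subset_closure (Set.smul_mem_smul ho hhw)))
    have hclosed : IsClosed (⋃ f ∈ F, f • closure (O • Q)) :=
      isClosed_biUnion_finset fun f _ => isClosed_closure.smul f
    have hz : z ∈ ⋃ f ∈ F, f • closure (O • Q) := by
      have : z ∈ closure (orbit T w) := by
        rw [(hmin w).closure_eq]; exact mem_univ z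
      exact closure_minimal horb hclosed this
    obtain ⟨f, hfF, hzf⟩ := mem_iUnion₂.mp hz
    refine ⟨π f, f, ?_, rfl⟩
    simp only [hDdef, mem_setOf_eq]
    have : f⁻¹ • z ∈ closure (O • Q) := by
      rwa [← mem_smul_set_iff_inv_smul_mem]
    exact closure_mono (smul_subset_smul_right hOV) this
  -- finite intersection property on the compact quotient
  have hmono : ∀ V V' : Set T, V ⊆ V' → C V ⊆ C V' := by
    intro V V' hVV'
    apply image_mono
    intro s hs
    exact closure_mono (smul_subset_smul_right hVV') hs
  let ι := {V : Set T // V ∈ 𝓝 (1 : T)}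
  haveI : Nonempty ι := ⟨⟨univ, univ_mem⟩⟩
  have hne : (⋂ i : ι, C i.1).Nonempty := by
    apply IsCompact.nonempty_iInter_of_directed_nonempty_isCompact_isClosed
    · intro i j
      exact ⟨⟨i.1 ∩ j.1, inter_mem i.2 j.2⟩, hmono _ _ inter_subset_left,
        hmono _ _ inter_subset_right⟩
    · exact fun i => hCne i.1 i.2
    · exact fun i => (hCclosed i.1).isCompact
    · exact fun i => hCclosed i.1
  obtain ⟨c, hc⟩ := hne
  obtain ⟨a, rfl⟩ := QuotientGroup.mk_surjective c
  refine ⟨a, ?_⟩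
  apply aux_mem_of_small_nhds (T := T) hQc
  intro V hV
  have : π a ∈ C V := mem_iInter.mp hc ⟨V, hV⟩
  obtain ⟨s, hs, hsa⟩ := this
  exact hDsat V s a hsa hs

/-- Minimality of the `H`-orbit closures. -/
private lemma aux_orbit_closure_minimal (hmin : ∀ x : X, Dense (orbit T x))
    (hcc : CompactSpace (T ⧸ H)) {x q : X} (hq : q ∈ closure (orbit H x)) :
    closure (orbit H q) = closure (orbit H x) := by
  apply Subset.antisymm (aux_orbit_closure_subset H hq)
  obtain ⟨s, hs⟩ := aux_reach H hmin hcc q x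
  have hsub1 : s⁻¹ • closure (orbit H x) ⊆ closure (orbit H q) := by
    rw [← aux_closure_orbit_smul]
    exact aux_orbit_closure_subset H hs
  have hsub2 : closure (orbit H q) ⊆ closure (orbit H x) := aux_orbit_closure_subset H hq
  have hinv : ∀ u ∈ closure (orbit H x), s⁻¹ • u ∈ closure (orbit H x) :=
    fun u hu => hsub2 (hsub1 (smul_mem_smul_set hu))
  have hfwd := aux_smul_of_inv_smul H hcc hinv
  intro u hu
  have : s⁻¹ • (s • u) ∈ closure (orbit H q) := hsub1 (smul_mem_smul_set (hfwd u hu))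
  rwa [inv_smul_smul] at this

/-- One-directional transfer of envelope membership. -/
private lemma aux_envelope_mono (hmin : ∀ x : X, Dense (orbit T x))
    (hcc : CompactSpace (T ⧸ H)) (x y : X) (t : T)
    (ht : t • x ∈ closure (orbit H x)) : t • y ∈ closure (orbit H y) := by
  obtain ⟨s, hq⟩ := aux_reach H hmin hcc x y
  set q := s⁻¹ • y with hqdef
  have hy : s • q = y := smul_inv_smul s y
  have htq : t • q ∈ closure (orbit H x) := by
    have h1 : t • q ∈ t • closure (orbit H x) := smul_mem_smul_set hq
    rw [← aux_closure_orbit_smul] at h1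
    exact aux_orbit_closure_subset H ht h1
  have hQy : closure (orbit H y) = s • closure (orbit H x) := by
    rw [← hy, aux_closure_orbit_smul, aux_orbit_closure_minimal H hmin hcc hq]
  have hty : t • y = s • (t • q) := by
    rw [← hy, aux_smul_comm]
  rw [hQy, hty]
  exact smul_mem_smul_set htq

end Aux

/-- For an abelian Hausdorff topological group `T` acting continuously and minimally on a
compact Hausdorff space `X`, and a co-compact closed subgroup `H` of `T`, the envelope
`E_x[H] = {t | t • x ∈ cl(H·x)}` does not depend on the base point `x`. -/
theorem envelope_basePoint_independent
    {T X : Type*} [CommGroup T] [TopologicalSpace T] [IsTopologicalGroup T] [T2Space T]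
    [TopologicalSpace X] [CompactSpace X] [T2Space X] [MulAction T X] [ContinuousSMul T X]
    (hmin : ∀ x : X, Dense (orbit T x))
    (H : Subgroup T) (hHclosed : IsClosed (H : Set T)) (hcc : CompactSpace (T ⧸ H))
    (x y : X) :
    {t : T | t • x ∈ closure (orbit H x)} = {t : T | t • y ∈ closure (orbit H y)} := by
  ext t
  simp only [Set.mem_setOf_eq]
  exact ⟨fun h => aux_envelope_mono H hmin hcc x y t h,
    fun h => aux_envelope_mono H hmin hcc y x t h⟩
end

section
/- Let T be a Hausdorff topological group acting continuously on a compact Hausdorff space X, let x ∈ X be an almost periodic point for the action of T, and let H be a normal co-compact closed subgroup of T. Then E_x[H] = E_y[H] for every y ∈ cl(H·x). -/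
open MulAction Pointwise

theorem aux_isOpen_forall {A B C : Type*} [TopologicalSpace A] [TopologicalSpace B]
    [TopologicalSpace C] {f : A × B → C} (hf : Continuous f) {K : Set A} (hK : IsCompact K)
    {W : Set C} (hW : IsOpen W) : IsOpen {b : B | ∀ a ∈ K, f (a, b) ∈ W} := by
  rw [isOpen_iff_forall_mem_open]
  intro b hb
  have hsub : K ×ˢ ({b} : Set B) ⊆ f ⁻¹' W := by
    rintro ⟨a, b'⟩ ⟨ha, hb'⟩
    simp only [Set.mem_singleton_iff] at hb'
    subst hb'
    exact hb a ha
  obtain ⟨u, v, hu, hv, hKu, hbv, huv⟩ :=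
    generalized_tube_lemma hK isCompact_singleton (hW.preimage hf) hsub
  exact ⟨v, fun b' hb' a ha => huv ⟨hKu ha, hb'⟩, hv, hbv rfl⟩

section Flow

variable {T X : Type*} [Group T] [TopologicalSpace T] [IsTopologicalGroup T]
  [TopologicalSpace X] [MulAction T X] [ContinuousSMul T X]

theorem isOpen_forall_smul_left {K : Set T} (hK : IsCompact K) {W : Set X}
    (hW : IsOpen W) : IsOpen {w : X | ∀ k ∈ K, k • w ∈ W} :=
  aux_isOpen_forall continuous_smul hK hW

theorem isOpen_forall_smul_right {M : Set X} (hM : IsCompact M) {W : Set X}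
    (hW : IsOpen W) : IsOpen {g : T | ∀ p ∈ M, g • p ∈ W} :=
  aux_isOpen_forall (f := fun q : X × T => q.2 • q.1) (continuous_snd.smul continuous_fst) hM hW

/-- almost periodic point: the `T`-orbit closure is minimal. -/
theorem ap_mem_closure_orbit_s13 [CompactSpace X] [T2Space X] (x : X)
    (hx : IsAlmostPeriodicPt T x) :
    ∀ y ∈ closure (orbit T x), x ∈ closure (orbit T y) := by
  intro y hy
  rw [mem_closure_iff]
  intro V hVopen hxV
  obtain ⟨C, hCnhds, hCclosed, hCV⟩ := exists_mem_nhds_isClosed_subset (hVopen.mem_nhds hxV)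
  obtain ⟨K, hK, hKA⟩ := hx C hCnhds
  have hΦ : IsClosed {w : X | ∃ k ∈ K, k • w ∈ C} := by
    have h1 : IsOpen {w : X | ∀ k ∈ K, k • w ∈ Cᶜ} :=
      isOpen_forall_smul_left hK hCclosed.isOpen_compl
    have : {w : X | ∃ k ∈ K, k • w ∈ C} = {w : X | ∀ k ∈ K, k • w ∈ Cᶜ}ᶜ := by
      ext w
      simp
    rw [this]
    exact h1.isClosed_compl
  have horb : orbit T x ⊆ {w : X | ∃ k ∈ K, k • w ∈ C} := by
    rintro _ ⟨t, rfl⟩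
    have ht : t ∈ K⁻¹ * {g : T | g • x ∈ C} := by rw [hKA]; trivial
    obtain ⟨k', hk', a, ha, hmul⟩ := Set.mem_mul.mp ht
    rw [Set.mem_inv] at hk'
    refine ⟨k'⁻¹, hk', ?_⟩
    have : k'⁻¹ • t • x = a • x := by
      rw [smul_smul, ← hmul]
      congr 1
      group
    rw [this]
    exact ha
  have hyΦ : y ∈ {w : X | ∃ k ∈ K, k • w ∈ C} := by
    have := closure_minimal horb hΦ
    exact this hy
  obtain ⟨k, hkK, hkC⟩ := hyΦ
  exact ⟨k • y, hCV hkC, mem_orbit y k⟩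

theorem ap_smul (x : X) (hx : IsAlmostPeriodicPt T x) (t : T) :
    IsAlmostPeriodicPt T (t • x) := by
  intro U hU
  have hU₀ : (fun p : X => t • p) ⁻¹' U ∈ nhds x :=
    ContinuousAt.preimage_mem_nhds (Continuous.continuousAt (continuous_const_smul t)) hU
  obtain ⟨K, hK, hKA⟩ := hx _ hU₀
  refine ⟨(fun k => t * k * t⁻¹) '' K, hK.image (by continuity), ?_⟩
  apply Set.eq_univ_of_forall
  intro g
  have hg : t⁻¹ * g * t ∈ K⁻¹ * {s : T | s • x ∈ (fun p : X => t • p) ⁻¹' U} := by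
    rw [hKA]; trivial
  obtain ⟨k', hk', a, ha, hmul⟩ := Set.mem_mul.mp hg
  rw [Set.mem_inv] at hk'
  refine Set.mem_mul.mpr ⟨(t * k'⁻¹ * t⁻¹)⁻¹, ?_, t * a * t⁻¹, ?_, ?_⟩
  · rw [Set.mem_inv, inv_inv]
    exact ⟨k'⁻¹, hk', rfl⟩
  · show (t * a * t⁻¹) • t • x ∈ U
    have : (t * a * t⁻¹) • t • x = t • (a • x) := by
      rw [smul_smul, smul_smul]
      congr 1
      group
    rw [this]
    exact ha
  · have h1 : (t * k'⁻¹ * t⁻¹)⁻¹ * (t * a * t⁻¹) = t * (k' * a) * t⁻¹ := by group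
    rw [h1, hmul]
    group

variable (H : Subgroup T)

theorem smul_orbit_subgroup [hN : H.Normal] (t : T) (z : X) :
    t • (orbit H z : Set X) = orbit H (t • z) := by
  ext p
  constructor
  · rintro ⟨q, ⟨⟨h, hh⟩, rfl⟩, rfl⟩
    refine ⟨⟨t * h * t⁻¹, hN.conj_mem h hh t⟩, ?_⟩
    show (t * h * t⁻¹) • t • z = t • h • z
    rw [smul_smul, smul_smul]
    congr 1
    group
  · rintro ⟨⟨h, hh⟩, rfl⟩
    refine ⟨(t⁻¹ * h * t) • z, ⟨⟨t⁻¹ * h * t, by simpa using hN.conj_mem h hh t⁻¹⟩, rfl⟩, ?_⟩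
    show t • (t⁻¹ * h * t) • z = h • t • z
    rw [smul_smul, smul_smul]
    congr 1
    group

theorem smul_mem_closure_orbit_s13 {h : T} (hh : h ∈ H) {z p : X}
    (hp : p ∈ closure (orbit H z)) : h • p ∈ closure (orbit H z) := by
  have h1 : h • p ∈ h • closure (orbit H z) := Set.smul_mem_smul_set hp
  rw [← closure_smul] at h1
  have horb : h • (orbit H z : Set X) = orbit H z := MulAction.smul_orbit (⟨h, hh⟩ : H) z
  rwa [horb] at h1

theorem smul_closure_orbit [H.Normal] (t : T) (z : X) :
    t • closure (orbit H z) = closure (orbit H (t • z)) := by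
  rw [← closure_smul, smul_orbit_subgroup H t z]


theorem orbit_closure_H_minimal [CompactSpace X] [T2Space X]
    (x : X) (hx : IsAlmostPeriodicPt T x) [hN : H.Normal]
    (hcc : CompactSpace (T ⧸ H)) :
    ∀ z ∈ closure (orbit H x), closure (orbit H z) = closure (orbit H x) := by
  classical
  set S : Set (Set X) :=
    {M | M.Nonempty ∧ IsClosed M ∧ M ⊆ closure (orbit H x) ∧
      ∀ h ∈ H, ∀ p ∈ M, h • p ∈ M} with hSdef
  have hYS : closure (orbit H x) ∈ S :=
    ⟨⟨x, subset_closure (mem_orbit_self x)⟩, isClosed_closure, le_refl _,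
      fun h hh p hp => smul_mem_closure_orbit_s13 H hh hp⟩
  have hzorn : ∃ M, M ⊆ closure (orbit H x) ∧ Minimal (· ∈ S) M := by
    apply zorn_superset_nonempty S ?_ _ hYS
    intro c hcS hchain hcne
    refine ⟨⋂₀ c, ⟨?_, ?_, ?_, ?_⟩, fun s hs => Set.sInter_subset_of_mem hs⟩
    · haveI := hcne.to_subtype
      apply IsCompact.nonempty_sInter_of_directed_nonempty_isCompact_isClosed
      · intro a ha b hb
        rcases eq_or_ne a b with rfl | hne
        · exact ⟨a, ha, Set.Subset.refl a, Set.Subset.refl a⟩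
        · rcases hchain ha hb hne with h | h
          · exact ⟨a, ha, Set.Subset.refl a, h⟩
          · exact ⟨b, hb, h, Set.Subset.refl b⟩
      · exact fun U hU => (hcS hU).1
      · exact fun U hU => (hcS hU).2.1.isCompact
      · exact fun U hU => (hcS hU).2.1
    · exact isClosed_sInter fun U hU => (hcS hU).2.1
    · obtain ⟨U₀, hU₀⟩ := hcne
      exact (Set.sInter_subset_of_mem hU₀).trans (hcS hU₀).2.2.1
    · intro h hh p hp
      exact Set.mem_sInter.mpr fun U hU => (hcS hU).2.2.2 h hh p (Set.mem_sInter.mp hp U hU)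
  obtain ⟨M, hMY, hMmin⟩ := hzorn
  obtain ⟨hMne, hMcl, hMsubY, hMinv⟩ := hMmin.prop
  obtain ⟨m, hm⟩ := hMne
  -- x is in the closure of the T-orbit of m
  have hmTx : m ∈ closure (orbit T x) := by
    refine closure_mono ?_ (hMsubY hm)
    rintro p ⟨⟨h, hh⟩, rfl⟩
    exact ⟨h, rfl⟩
  have hxTm : x ∈ closure (orbit T m) := ap_mem_closure_orbit_s13 x hx m hmTx
  -- an ultrafilter G on T with (· • m) → x along G
  have hne : Filter.NeBot (Filter.comap (fun t : T => t • m) (nhds x)) := by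
    rw [Filter.comap_neBot_iff]
    intro U hU
    obtain ⟨p, hpU, t, rfl⟩ := mem_closure_iff_nhds.mp hxTm U hU
    exact ⟨t, hpU⟩
  set G : Ultrafilter T := @Ultrafilter.of _ _ hne with hGdef
  have hGf : Filter.Tendsto (fun t : T => t • m) G (nhds x) :=
    le_trans (Filter.map_mono (Ultrafilter.of_le _)) Filter.map_comap_le
  -- a limit coset in the compact quotient
  obtain ⟨c, -, hc⟩ := isCompact_univ.ultrafilter_le_nhds
    (G.map (QuotientGroup.mk : T → T ⧸ H)) (Filter.le_principal_iff.mpr Filter.univ_mem)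
  obtain ⟨s, rfl⟩ := QuotientGroup.mk_surjective c
  have hq : Filter.Tendsto (QuotientGroup.mk : T → T ⧸ H) G
      (nhds (QuotientGroup.mk s)) := by
    show Filter.map (QuotientGroup.mk : T → T ⧸ H) ↑G ≤ nhds (QuotientGroup.mk s)
    rwa [← Ultrafilter.coe_map]
  have hMcomp : IsCompact M := hMcl.isCompact
  have hsMcl : IsClosed (s • M) := hMcl.smul s
  -- x belongs to s • M
  have hxsM : x ∈ s • M := by
    by_contra hxnot
    obtain ⟨O, W, hOopen, hWopen, hxO, hsMW, hdisj⟩ :=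
      NormalSpace.normal {x} (s • M) isClosed_singleton hsMcl
        (Set.disjoint_singleton_left.mpr hxnot)
    have hVopen : IsOpen {g : T | ∀ p ∈ M, g • p ∈ W} :=
      isOpen_forall_smul_right hMcomp hWopen
    have hsV : s ∈ {g : T | ∀ p ∈ M, g • p ∈ W} :=
      fun p hp => hsMW (Set.smul_mem_smul_set hp)
    have hVG : {g : T | ∀ p ∈ M, g • p ∈ W} ∈ G := by
      have hopen : IsOpen ((QuotientGroup.mk : T → T ⧸ H) ''
          {g : T | ∀ p ∈ M, g • p ∈ W}) :=
        QuotientGroup.isOpenMap_coe _ hVopen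
      have hmem : (QuotientGroup.mk s : T ⧸ H) ∈
          (QuotientGroup.mk : T → T ⧸ H) '' {g : T | ∀ p ∈ M, g • p ∈ W} :=
        ⟨s, hsV, rfl⟩
      have hpre := Filter.mem_map.mp (hq (hopen.mem_nhds hmem))
      refine Filter.mem_of_superset hpre ?_
      intro g hg
      obtain ⟨g', hg', hgg'⟩ := hg
      have hmemH : g'⁻¹ * g ∈ H := QuotientGroup.eq.mp hgg'
      intro p hp
      have : g = g' * (g'⁻¹ * g) := by group
      rw [this, mul_smul]
      exact hg' _ (hMinv _ hmemH p hp)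
    have hWev : ∀ᶠ t in (G : Filter T), t • m ∈ W :=
      Filter.mem_of_superset hVG fun g hg => hg m hm
    have hxW : x ∈ closure W := mem_closure_of_tendsto hGf hWev
    obtain ⟨p, hpO, hpW⟩ := mem_closure_iff.mp hxW O hOopen (hxO rfl)
    exact Set.disjoint_left.mp hdisj hpO hpW
  -- s • M is H-invariant
  have hsMinv : ∀ h ∈ H, ∀ p ∈ s • M, h • p ∈ s • M := by
    intro h hh p hp
    obtain ⟨p₀, hp₀, rfl⟩ := hp
    have hmem : s⁻¹ * h * s ∈ H := by simpa using hN.conj_mem h hh s⁻¹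
    refine ⟨(s⁻¹ * h * s) • p₀, hMinv _ hmem _ hp₀, ?_⟩
    show s • (s⁻¹ * h * s) • p₀ = h • s • p₀
    rw [smul_smul, smul_smul]
    congr 1
    group
  have hYsub : closure (orbit H x) ⊆ s • M := by
    apply closure_minimal ?_ hsMcl
    rintro p ⟨⟨h, hh⟩, rfl⟩
    exact hsMinv h hh x hxsM
  -- every point of s • M has full H-orbit closure
  have hkey : ∀ p ∈ s • M, closure (orbit H p) = s • M := by
    intro p hp
    have horbp : orbit H p ⊆ s • M := by
      rintro q ⟨⟨h, hh⟩, rfl⟩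
      exact hsMinv h hh p hp
    have hNsub : closure (orbit H p) ⊆ s • M := closure_minimal horbp hsMcl
    have hsub : s⁻¹ • closure (orbit H p) ⊆ M := by
      intro q hq
      obtain ⟨n, hn, rfl⟩ := hq
      obtain ⟨p₀, hp₀, rfl⟩ := hNsub hn
      show s⁻¹ • s • p₀ ∈ M
      rw [inv_smul_smul]
      exact hp₀
    have hSmem : s⁻¹ • closure (orbit H p) ∈ S := by
      refine ⟨⟨s⁻¹ • p, Set.smul_mem_smul_set (subset_closure (mem_orbit_self p))⟩,
        isClosed_closure.smul s⁻¹, hsub.trans hMsubY, ?_⟩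
      intro h hh q hq
      obtain ⟨n, hn, rfl⟩ := hq
      have hmem : s * h * s⁻¹ ∈ H := hN.conj_mem h hh s
      refine ⟨(s * h * s⁻¹) • n, smul_mem_closure_orbit_s13 H hmem hn, ?_⟩
      show s⁻¹ • (s * h * s⁻¹) • n = h • s⁻¹ • n
      rw [smul_smul, smul_smul]
      congr 1
      group
    have heq : s⁻¹ • closure (orbit H p) = M :=
      le_antisymm hsub (hMmin.2 hSmem hsub)
    calc closure (orbit H p) = s • (s⁻¹ • closure (orbit H p)) := (smul_inv_smul s _).symm
      _ = s • M := by rw [heq]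
  intro z hz
  rw [hkey z (hYsub hz), hkey x (hYsub (subset_closure (mem_orbit_self x)))]

end Flow

/-- If `x` is an almost periodic point for the `T`-action and `H` is a normal co-compact
closed subgroup of `T`, then `E_x[H] = E_y[H]` for every `y ∈ cl(H·x)`. -/
theorem envelope_eq_on_orbitClosure
    {T X : Type*} [Group T] [TopologicalSpace T] [IsTopologicalGroup T] [T2Space T]
    [TopologicalSpace X] [CompactSpace X] [T2Space X] [MulAction T X] [ContinuousSMul T X]
    (x : X) (hx : IsAlmostPeriodicPt T x)
    (H : Subgroup T) [H.Normal] (hHclosed : IsClosed (H : Set T))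
    (hcc : CompactSpace (T ⧸ H)) :
    ∀ y ∈ closure (orbit H x),
      {t : T | t • x ∈ closure (orbit H x)} = {t : T | t • y ∈ closure (orbit H y)} := by
  intro y hy
  have hkeyx := orbit_closure_H_minimal H x hx hcc
  have hYy : closure (orbit H y) = closure (orbit H x) := hkeyx y hy
  ext t
  simp only [Set.mem_setOf_eq, hYy]
  constructor
  · intro htx
    have h1 : t • y ∈ closure (orbit H (t • x)) := by
      rw [← smul_closure_orbit]
      exact Set.smul_mem_smul_set hy
    exact (hkeyx _ htx) ▸ h1
  · intro hty
    have h1 : t • y ∈ closure (orbit H (t • x)) := by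
      rw [← smul_closure_orbit]
      exact Set.smul_mem_smul_set hy
    have hkeytx := orbit_closure_H_minimal H (t • x) (ap_smul x hx t) hcc
    have h2 : closure (orbit H (t • y)) = closure (orbit H (t • x)) := hkeytx _ h1
    have h3 : closure (orbit H (t • y)) = closure (orbit H x) := hkeyx _ hty
    have h4 : t • x ∈ closure (orbit H (t • x)) := subset_closure (mem_orbit_self _)
    rw [← h2, h3] at h4
    exact h4
end

section
/- Let T be a Hausdorff topological group acting continuously on a compact Hausdorff space X, let x ∈ X, and let A be a normal syndetic closed subgroup of T. Then E_x[A] is a closed syndetic subgroup of T containing A, and cl(A·x) = cl(E_x[A]·x). -/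
open MulAction Pointwise

section Aux

variable {T X : Type*} [Group T] [TopologicalSpace T] [IsTopologicalGroup T] [T2Space T]
    [TopologicalSpace X] [CompactSpace X] [T2Space X] [MulAction T X] [ContinuousSMul T X]
    (A : Subgroup T) [A.Normal] (x : X)

/-- The closure of the `A`-orbit is `A`-invariant. -/
lemma env_smul_mem {a : T} (ha : a ∈ A) {y : X} (hy : y ∈ closure (orbit A x)) :
    a • y ∈ closure (orbit A x) := by
  have hmaps : Set.MapsTo (fun y : X => a • y) (orbit A x) (orbit A x) := by
    rintro _ ⟨b, rfl⟩
    refine ⟨⟨a, ha⟩ * b, ?_⟩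
    simp [Subgroup.smul_def, mul_smul]
  exact hmaps.closure (continuous_const_smul a) hy

/-- If `t • x` lies in the orbit closure, then `t` maps the orbit closure into itself. -/
lemma env_smul_mem' {t : T} (ht : t • x ∈ closure (orbit A x)) {y : X}
    (hy : y ∈ closure (orbit A x)) : t • y ∈ closure (orbit A x) := by
  have hmaps : Set.MapsTo (fun y : X => t • y) (orbit A x) (closure (orbit A x)) := by
    rintro _ ⟨b, rfl⟩
    have hb : t * (b : T) * t⁻¹ ∈ A := ‹A.Normal›.conj_mem _ b.2 t
    have heq : t • ((b : T) • x) = (t * (b : T) * t⁻¹) • (t • x) := by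
      simp [← mul_smul, mul_assoc]
    show t • ((b : T) • x) ∈ closure (orbit A x)
    rw [heq]
    exact env_smul_mem A x hb ht
  have h2 := hmaps.closure (continuous_const_smul t)
  rw [closure_closure] at h2
  exact h2 hy

lemma env_pow_mem {t : T} (ht : t • x ∈ closure (orbit A x)) (n : ℕ) :
    t ^ (n + 1) • x ∈ closure (orbit A x) := by
  induction n with
  | zero => simpa using ht
  | succ n ih =>
      have heq : t ^ (n + 1 + 1) • x = t • (t ^ (n + 1) • x) := by
        rw [← mul_smul, ← pow_succ']
      rw [heq]
      exact env_smul_mem' A x ht ih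

lemma env_inv_back {t : T} (ht : t • x ∈ closure (orbit A x)) :
    x ∈ closure (orbit A (t⁻¹ • x)) := by
  have hmaps : Set.MapsTo (fun y : X => t⁻¹ • y) (orbit A x) (orbit A (t⁻¹ • x)) := by
    rintro _ ⟨b, rfl⟩
    refine ⟨⟨t⁻¹ * (b : T) * t⁻¹⁻¹, ‹A.Normal›.conj_mem _ b.2 t⁻¹⟩, ?_⟩
    simp [Subgroup.smul_def, ← mul_smul, mul_assoc]
  have h2 := hmaps.closure (continuous_const_smul t⁻¹) ht
  simpa [← mul_smul] using h2

end Aux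

/-- For `A` a normal syndetic closed subgroup of `T` and `x ∈ X`, the envelope
`E_x[A] = {t | t • x ∈ cl(A·x)}` is a closed syndetic subgroup of `T` containing `A`,
and `cl(A·x) = cl(E_x[A]·x)`. -/
theorem envelope_of_normal_syndetic
    {T X : Type*} [Group T] [TopologicalSpace T] [IsTopologicalGroup T] [T2Space T]
    [TopologicalSpace X] [CompactSpace X] [T2Space X] [MulAction T X] [ContinuousSMul T X]
    (A : Subgroup T) [A.Normal] (hAclosed : IsClosed (A : Set T))
    (hAsyn : Syndetic (A : Set T)) (x : X) :
    (∃ E : Subgroup T, (E : Set T) = {t : T | t • x ∈ closure (orbit A x)}) ∧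
    IsClosed {t : T | t • x ∈ closure (orbit A x)} ∧
    Syndetic {t : T | t • x ∈ closure (orbit A x)} ∧
    (A : Set T) ⊆ {t : T | t • x ∈ closure (orbit A x)} ∧
    closure (orbit A x) =
      closure ((fun t : T => t • x) '' {t : T | t • x ∈ closure (orbit A x)}) := by
  obtain ⟨K, hKc, hKA⟩ := hAsyn
  have hx : x ∈ closure (orbit A x) := subset_closure (mem_orbit_self x)
  have hA_sub : (A : Set T) ⊆ {t : T | t • x ∈ closure (orbit A x)} := by
    intro a ha
    exact subset_closure ⟨⟨a, ha⟩, by simp [Subgroup.smul_def]⟩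
  -- the quotient group G = T ⧸ A
  let G := T ⧸ A
  let π : T → G := QuotientGroup.mk
  have hπcont : Continuous π := continuous_quot_mk
  haveI : T3Space G := @QuotientGroup.instT3Space T _ _ _ A _ hAclosed
  -- G is compact
  haveI : CompactSpace G := by
    rw [← isCompact_univ_iff]
    have h1 : IsCompact (π '' K⁻¹) := hKc.inv.image hπcont
    have h2 : π '' K⁻¹ = Set.univ := by
      apply Set.eq_univ_of_forall
      intro g
      induction g using QuotientGroup.induction_on with
      | H s =>
        have hs : s ∈ K⁻¹ * (A : Set T) := by rw [hKA]; trivial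
        obtain ⟨k, hk, a, ha, rfl⟩ := hs
        refine ⟨k, hk, ?_⟩
        show QuotientGroup.mk k = QuotientGroup.mk (k * a)
        rw [QuotientGroup.eq]
        simpa [mul_assoc] using ha
    rwa [h2] at h1
  -- the closed set D ⊆ X × G
  let f : T → X × G := fun s => (s • x, π s)
  let D : Set (X × G) := closure (Set.range f)
  -- fiber lemma: if x is in the closure of the A-orbit of s • x then (x, π s) ∈ D
  have fiber : ∀ s : T, x ∈ closure (orbit A (s • x)) → (x, π s) ∈ D := by
    intro s hxs
    have hmaps : Set.MapsTo (fun y : X => (y, π s)) (orbit A (s • x)) (Set.range f) := by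
      rintro _ ⟨b, rfl⟩
      refine ⟨(b : T) * s, ?_⟩
      have hmk : π ((b : T) * s) = π s := by
        show QuotientGroup.mk _ = QuotientGroup.mk _
        rw [QuotientGroup.eq]
        have hc := ‹A.Normal›.conj_mem _ (A.inv_mem b.2) s⁻¹
        simpa [mul_assoc] using hc
      simp only [f, hmk, Subgroup.smul_def, mul_smul]
    exact hmaps.closure (Continuous.prodMk continuous_id continuous_const) hxs
  -- inverse-closedness of the envelope
  have inv_mem : ∀ t : T, t • x ∈ closure (orbit A x) → t⁻¹ • x ∈ closure (orbit A x) := by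
    intro t ht
    -- it suffices to show x ∈ cl (orbit A (t • x))
    suffices hgoal : x ∈ closure (orbit A (t • x)) by
      have hmaps : Set.MapsTo (fun y : X => t⁻¹ • y) (orbit A (t • x)) (orbit A x) := by
        rintro _ ⟨b, rfl⟩
        refine ⟨⟨t⁻¹ * (b : T) * t⁻¹⁻¹, ‹A.Normal›.conj_mem _ b.2 t⁻¹⟩, ?_⟩
        simp [Subgroup.smul_def, ← mul_smul, mul_assoc]
      have h2 := hmaps.closure (continuous_const_smul t⁻¹) hgoal
      simpa using h2
    set g : G := π t with hg
    -- the compact subsemigroup generated by g² ; it contains an idempotent, hence 1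
    set S₀ : Set G := {h : G | ∃ n : ℕ, g ^ (n + 2) = h} with hS₀
    have hmul₀ : ∀ a ∈ S₀, ∀ b ∈ S₀, a * b ∈ S₀ := by
      rintro _ ⟨m, rfl⟩ _ ⟨n, rfl⟩
      exact ⟨m + n + 2, by rw [← pow_add]; congr 1; omega⟩
    have hmulcl : ∀ a ∈ closure S₀, ∀ b ∈ closure S₀, a * b ∈ closure S₀ := by
      have step1 : ∀ a ∈ S₀, ∀ b ∈ closure S₀, a * b ∈ closure S₀ := by
        intro a ha b hb
        have hm : Set.MapsTo (fun c => a * c) S₀ (closure S₀) := fun c hc =>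
          subset_closure (hmul₀ a ha c hc)
        have h2 := hm.closure (continuous_mul_left a)
        rw [closure_closure] at h2
        exact h2 hb
      intro a ha b hb
      have hm : Set.MapsTo (fun c => c * b) S₀ (closure S₀) := fun c hc => step1 c hc b hb
      have h2 := hm.closure (continuous_mul_right b)
      rw [closure_closure] at h2
      exact h2 ha
    obtain ⟨m, hmS, hm_idem⟩ :=
      exists_idempotent_in_compact_subsemigroup (fun r : G => continuous_mul_right r)
        (closure S₀) (⟨g ^ 2, subset_closure ⟨0, by norm_num⟩⟩)
        isClosed_closure.isCompact hmulcl
    have hm1 : m = 1 := mul_left_cancel (a := m) (by rw [hm_idem, mul_one])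
    have h1cl : (1 : G) ∈ closure S₀ := hm1 ▸ hmS
    -- push forward via h ↦ g * h⁻¹ : get g ∈ closure {π (t⁻¹ ^ (n+1))}
    set Sneg : Set G := {h : G | ∃ n : ℕ, π (t⁻¹ ^ (n + 1)) = h} with hSneg
    have hπpow : ∀ n : ℕ, π (t⁻¹ ^ (n + 1)) = g⁻¹ ^ (n + 1) := by
      intro n
      show QuotientGroup.mk (t⁻¹ ^ (n + 1)) = (QuotientGroup.mk t : G)⁻¹ ^ (n + 1)
      rw [← QuotientGroup.mk_inv, ← QuotientGroup.mk_pow]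
    have hφmaps : Set.MapsTo (fun h : G => g * h⁻¹) S₀ Sneg := by
      rintro _ ⟨n, rfl⟩
      refine ⟨n, ?_⟩
      rw [hπpow n]
      show g⁻¹ ^ (n + 1) = g * (g ^ (n + 1 + 1))⁻¹
      rw [pow_succ g (n + 1), mul_inv_rev, ← mul_assoc, mul_inv_cancel, one_mul, inv_pow]
    have hφcont : Continuous (fun h : G => g * h⁻¹) := (continuous_const (y := g)).mul (continuous_inv (G := G))
    have hgcl : g ∈ closure Sneg := by
      have h2 := hφmaps.closure hφcont h1cl
      simpa using h2
    -- the fiber over each point of Sneg contains x, and D is closed, so (x, g) ∈ D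
    have hψmaps : Set.MapsTo (fun h : G => ((x : X), h)) Sneg D := by
      rintro _ ⟨n, rfl⟩
      apply fiber
      have h2 := env_inv_back A x (env_pow_mem A x ht n)
      rwa [← inv_pow] at h2
    have hxtD : ((x : X), g) ∈ D := by
      have h2 := hψmaps.closure (Continuous.prodMk continuous_const continuous_id) hgcl
      rw [closure_closure] at h2
      exact h2
    -- extract: x ∈ closure (orbit A (t • x))
    rw [mem_closure_iff]
    intro W hWopen hxW
    have hWnx : W ∈ nhds ((1 : T) • x) := by rw [one_smul]; exact hWopen.mem_nhds hxW
    have hpre : (fun p : T × X => p.1 • p.2) ⁻¹' W ∈ nhds ((1 : T), x) :=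
      (continuous_smul (M := T) (X := X)).continuousAt.preimage_mem_nhds hWnx
    rw [mem_nhds_prod_iff] at hpre
    obtain ⟨V, hV, W', hW', hVW'⟩ := hpre
    have hVinv : V⁻¹ ∈ nhds (1 : T) := by
      have h2 := (continuous_inv (G := T)).continuousAt.preimage_mem_nhds
        (by simpa using hV : V ∈ nhds ((1 : T)⁻¹))
      simpa [Set.inv_preimage] using h2
    obtain ⟨U, hUsub, hUopen, hU1⟩ := mem_nhds_iff.mp hVinv
    have hNopen : IsOpen (π '' (U * {t})) :=
      QuotientGroup.isOpenMap_coe _ (hUopen.mul_right)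
    have hπtN : g ∈ π '' (U * {t}) :=
      ⟨t, ⟨1, hU1, t, rfl, one_mul t⟩, rfl⟩
    have hprod : W' ×ˢ (π '' (U * {t})) ∈ nhds ((x : X), g) :=
      prod_mem_nhds hW' (hNopen.mem_nhds hπtN)
    obtain ⟨p, hpmem, s, hfs⟩ := mem_closure_iff_nhds.mp hxtD _ hprod
    obtain ⟨hp1, hp2⟩ := hpmem
    have hsx : s • x ∈ W' := by rw [← hfs] at hp1; exact hp1
    have hπs : π s ∈ π '' (U * {t}) := by rw [← hfs] at hp2; exact hp2
    obtain ⟨w, hw, hws⟩ := hπs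
    obtain ⟨u, hu, t'', ht'', rfl⟩ := hw
    rw [Set.mem_singleton_iff] at ht''
    rw [ht''] at hws
    have ha : (u * t)⁻¹ * s ∈ A := (QuotientGroup.eq).mp hws
    have huV : u⁻¹ ∈ V := hUsub hu
    have hWel : u⁻¹ • (s • x) ∈ W := hVW' (Set.mk_mem_prod huV hsx)
    refine ⟨u⁻¹ • (s • x), hWel, ?_⟩
    refine ⟨⟨t * ((u * t)⁻¹ * s) * t⁻¹, ‹A.Normal›.conj_mem _ ha t⟩, ?_⟩
    simp only [Subgroup.smul_def, ← mul_smul]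
    congr 1
    group
  -- closedness of the envelope
  have hEclosed : IsClosed {t : T | t • x ∈ closure (orbit A x)} :=
    IsClosed.preimage (by fun_prop : Continuous fun t : T => t • x) isClosed_closure
  -- the envelope as a subgroup
  refine ⟨⟨{ carrier := {t : T | t • x ∈ closure (orbit A x)}
             one_mem' := by simpa using hx
             mul_mem' := by
               intro s t hs ht
               show (s * t) • x ∈ closure (orbit A x)
               rw [mul_smul]
               exact env_smul_mem' A x hs ht
             inv_mem' := by
               intro t ht
               exact inv_mem t ht }, rfl⟩, hEclosed, ?_, hA_sub, ?_⟩
  · exact ⟨K, hKc, Set.eq_univ_of_univ_subset (hKA ▸ Set.mul_subset_mul_left hA_sub)⟩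
  · -- closure (orbit A x) = closure (E • x)
    apply le_antisymm
    · apply closure_mono
      rintro _ ⟨b, rfl⟩
      exact ⟨(b : T), hA_sub b.2, rfl⟩
    · apply closure_minimal _ isClosed_closure
      rintro _ ⟨t, ht, rfl⟩
      exact ht
end
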